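/- arXiv:2307.14023 — 7 statements merged into one kernel-verified Lean document; each statement's English description precedes it below -/
import Mathlib

section
/- For every embedding dimension d ≥ 1 and every head size s ≥ 1, there exist a sequence length n, input sequences X⁽¹⁾, X⁽²⁾ ∈ ℝ^{d×n} that are tokenwise (r_min, r_max, ε)-separated for some 0 < r_min < r_max and ε > 0, have no duplicate token within each sequence, satisfy 𝒱⁽¹⁾ ≠ 𝒱⁽²⁾, and share a common token X⁽¹⁾_{:,k} = X⁽²⁾_{:,l} for some columns k, l, such that for every number of heads h ≥ 1 and every choice of weight matrices W_i^{(O)} ∈ ℝ^{d×s}, W_i^{(V)}, W_i^{(K)}, W_i^{(Q)} ∈ ℝ^{s×d} (i = 1,…,h), the one-layer multi-head hardmax self-attention with skip connection satisfies ℱ_H^{(SA)}(X⁽¹⁾)_{:,k} = ℱ_H^{(SA)}(X⁽²⁾)_{:,l}; consequently ℱ_H^{(SA)} is not an (r, δ)-contextual mapping for {X⁽¹⁾, X⁽²⁾} for any r > 0 and δ > 0. -/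
open scoped BigOperators Classical
open Matrix

noncomputable section

def softmax {n : ℕ} (a : Fin n → ℝ) : Fin n → ℝ :=
  fun i => Real.exp (a i) / ∑ j, Real.exp (a j)

def boltz {n : ℕ} (a : Fin n → ℝ) : ℝ := ∑ i, a i * softmax a i

def argmaxSet {n : ℕ} (a : Fin n → ℝ) : Finset (Fin n) :=
  Finset.univ.filter (fun i => ∀ j, a j ≤ a i)

def hardmax {n : ℕ} (a : Fin n → ℝ) : Fin n → ℝ :=
  fun i => if i ∈ argmaxSet a then (1 : ℝ) / (argmaxSet a).card else 0

def softmaxCols {n m : ℕ} (A : Matrix (Fin n) (Fin m) ℝ) : Matrix (Fin n) (Fin m) ℝ :=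
  Matrix.of fun i k => softmax (fun j => A j k) i

def hardmaxCols {n m : ℕ} (A : Matrix (Fin n) (Fin m) ℝ) : Matrix (Fin n) (Fin m) ℝ :=
  Matrix.of fun i k => hardmax (fun j => A j k) i

def attnS {d n s : ℕ} (WO : Matrix (Fin d) (Fin s) ℝ)
    (WV WK WQ : Matrix (Fin s) (Fin d) ℝ) (Z : Matrix (Fin d) (Fin n) ℝ) :
    Matrix (Fin d) (Fin n) ℝ :=
  Z + WO * (WV * Z) * softmaxCols ((WK * Z)ᵀ * (WQ * Z))

def attnH {d n s h : ℕ} (WO : Fin h → Matrix (Fin d) (Fin s) ℝ)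
    (WV WK WQ : Fin h → Matrix (Fin s) (Fin d) ℝ) (Z : Matrix (Fin d) (Fin n) ℝ) :
    Matrix (Fin d) (Fin n) ℝ :=
  Z + ∑ i, WO i * (WV i * Z) * hardmaxCols ((WK i * Z)ᵀ * (WQ i * Z))

def l2norm {d : ℕ} (x : Fin d → ℝ) : ℝ := Real.sqrt (∑ t, (x t) ^ 2)

def TokSep {d n N : ℕ} (rmin rmax δ : ℝ) (X : Fin N → Matrix (Fin d) (Fin n) ℝ) : Prop :=
  (∀ i k, rmin < l2norm (fun t => X i t k)) ∧
  (∀ i k, l2norm (fun t => X i t k) < rmax) ∧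
  (∀ i j k l, (fun t => X i t k) ≠ (fun t => X j t l) →
    δ < l2norm (fun t => X i t k - X j t l))

def vocab {d n : ℕ} (X : Matrix (Fin d) (Fin n) ℝ) : Finset (Fin d → ℝ) :=
  Finset.image (fun k => (fun t => X t k)) Finset.univ

def ContextualMapping {d n N : ℕ} (X : Fin N → Matrix (Fin d) (Fin n) ℝ)
    (q : Matrix (Fin d) (Fin n) ℝ → Matrix (Fin d) (Fin n) ℝ) (r δ : ℝ) : Prop :=
  (∀ i k, l2norm (fun t => q (X i) t k) < r) ∧
  (∀ i j k l, (vocab (X i) ≠ vocab (X j) ∨ (fun t => X i t k) ≠ (fun t => X j t l)) →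
    δ < l2norm (fun t => q (X i) t k - q (X j) t l))

def ffn {d n q : ℕ} (W1 : Matrix (Fin q) (Fin d) ℝ) (W2 : Matrix (Fin d) (Fin q) ℝ)
    (b1 : Fin q → ℝ) (b2 : Fin d → ℝ) (H : Matrix (Fin d) (Fin n) ℝ) :
    Matrix (Fin d) (Fin n) ℝ :=
  Matrix.of fun t k =>
    H t k + W2.mulVec (fun u => max 0 (W1.mulVec (fun t' => H t' k) u + b1 u)) t + b2 t

def logSumExp {n : ℕ} (a : Fin n → ℝ) : ℝ := Real.log (∑ i, Real.exp (a i))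

def entS {n : ℕ} (p : Fin n → ℝ) : ℝ := -∑ i, p i * Real.log (p i)


-- Auxiliary constructions for statement0

def Xmat (d : ℕ) (hd : 1 ≤ d) (v : Fin 4 → ℝ) : Matrix (Fin d) (Fin 4) ℝ :=
  Matrix.of fun t k => if t = ⟨0, hd⟩ then v k else 0

lemma argmax_pos {α : ℝ} (hα : 0 < α) (v : Fin 4 → ℝ)
    (h01 : v 0 < v 1) (h12 : v 1 < v 2) (h23 : v 2 < v 3) :
    argmaxSet (fun j => α * v j) = {3} := by
  ext j
  simp only [argmaxSet, Finset.mem_filter, Finset.mem_univ, true_and, Finset.mem_singleton]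
  constructor
  · intro h
    have h3 := h 3
    have hv : v 3 ≤ v j := le_of_mul_le_mul_left h3 hα
    fin_cases j <;> first | rfl | (exfalso; revert hv; simp; linarith)
  · rintro rfl j
    have : v j ≤ v 3 := by fin_cases j <;> simp <;> linarith
    exact mul_le_mul_of_nonneg_left this hα.le

lemma argmax_neg {α : ℝ} (hα : α < 0) (v : Fin 4 → ℝ)
    (h01 : v 0 < v 1) (h12 : v 1 < v 2) (h23 : v 2 < v 3) :
    argmaxSet (fun j => α * v j) = {0} := by
  ext j
  simp only [argmaxSet, Finset.mem_filter, Finset.mem_univ, true_and, Finset.mem_singleton]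
  constructor
  · intro h
    have h0 := h 0
    have hv : v j ≤ v 0 := by nlinarith
    fin_cases j <;> first | rfl | (exfalso; revert hv; simp; linarith)
  · rintro rfl j
    have : v 0 ≤ v j := by fin_cases j <;> simp <;> linarith
    nlinarith

lemma hm_sum (α : ℝ) (v : Fin 4 → ℝ)
    (h01 : v 0 < v 1) (h12 : v 1 < v 2) (h23 : v 2 < v 3) :
    ∑ j, v j * hardmax (fun j => α * v j) j
      = if 0 < α then v 3 else if α < 0 then v 0 else (v 0 + v 1 + v 2 + v 3) / 4 := by
  rcases lt_trichotomy α 0 with hα | rfl | hα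
  · rw [if_neg (by linarith), if_pos hα]
    simp [hardmax, argmax_neg hα v h01 h12 h23, Fin.sum_univ_four]
  · rw [if_neg (by norm_num), if_neg (by norm_num)]
    have h : argmaxSet (fun _ : Fin 4 => (0:ℝ)) = Finset.univ := by ext j; simp [argmaxSet]
    simp [hardmax, zero_mul, h, Fin.sum_univ_four, Finset.card_univ]
    ring
  · rw [if_pos hα]
    simp [hardmax, argmax_pos hα v h01 h12 h23, Fin.sum_univ_four]

lemma head_col (d s : ℕ) (hd : 1 ≤ d)
    (WO : Matrix (Fin d) (Fin s) ℝ) (WV WK WQ : Matrix (Fin s) (Fin d) ℝ)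
    (v : Fin 4 → ℝ) (hv0 : v 0 = 1)
    (h01 : v 0 < v 1) (h12 : v 1 < v 2) (h23 : v 2 < v 3) (t : Fin d) :
    (WO * (WV * Xmat d hd v) * hardmaxCols ((WK * Xmat d hd v)ᵀ * (WQ * Xmat d hd v))) t 0
      = (∑ p, WO t p * WV p ⟨0, hd⟩) *
        (if 0 < ∑ u, WK u ⟨0, hd⟩ * WQ u ⟨0, hd⟩ then v 3
         else if (∑ u, WK u ⟨0, hd⟩ * WQ u ⟨0, hd⟩) < 0 then v 0
         else (v 0 + v 1 + v 2 + v 3) / 4) := by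
  set i0 : Fin d := ⟨0, hd⟩ with hi0
  set Z := Xmat d hd v with hZ
  set α := ∑ u, WK u i0 * WQ u i0 with hα
  have hKZ : ∀ (W : Matrix (Fin s) (Fin d) ℝ) u j, (W * Z) u j = W u i0 * v j := by
    intro W u j
    simp [hZ, hi0, Xmat, Matrix.mul_apply, mul_ite, mul_zero, Finset.sum_ite_eq']
  have hscore : (fun j => ((WK * Z)ᵀ * (WQ * Z)) j 0) = fun j => α * v j := by
    funext j
    simp only [Matrix.mul_apply, Matrix.transpose_apply, hKZ]
    rw [hα, Finset.sum_mul]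
    refine Finset.sum_congr rfl fun u _ => ?_
    rw [hv0]; ring
  have hM : ∀ j, (WO * (WV * Z)) t j = (∑ p, WO t p * WV p i0) * v j := by
    intro j
    simp only [Matrix.mul_apply, hKZ]
    rw [Finset.sum_mul]
    exact Finset.sum_congr rfl fun p _ => by ring
  have hH : ∀ j, hardmaxCols ((WK * Z)ᵀ * (WQ * Z)) j 0 = hardmax (fun j' => α * v j') j := by
    intro j
    simp only [hardmaxCols, Matrix.of_apply]
    rw [show (fun j' => ((WK * Z)ᵀ * (WQ * Z)) j' 0) = fun j' => α * v j' from hscore]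
  rw [Matrix.mul_apply]
  calc ∑ j, (WO * (WV * Z)) t j * hardmaxCols ((WK * Z)ᵀ * (WQ * Z)) j 0
      = ∑ j, (∑ p, WO t p * WV p i0) * (v j * hardmax (fun j' => α * v j') j) := by
        refine Finset.sum_congr rfl fun j _ => ?_
        rw [hM j, hH j]; ring
    _ = (∑ p, WO t p * WV p i0) * ∑ j, v j * hardmax (fun j' => α * v j') j := by
        rw [Finset.mul_sum]
    _ = _ := by rw [hm_sum α v h01 h12 h23]

lemma sum_sq_ite (d : ℕ) (hd : 1 ≤ d) (a : ℝ) :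
    ∑ t : Fin d, (if t = (⟨0, hd⟩ : Fin d) then a else 0) ^ 2 = a ^ 2 := by
  rw [Finset.sum_congr rfl (fun t _ =>
    show _ = if t = (⟨0, hd⟩ : Fin d) then a ^ 2 else 0 by split <;> simp)]
  simp [Finset.sum_ite_eq']

lemma l2_ite (d : ℕ) (hd : 1 ≤ d) (a : ℝ) :
    l2norm (fun t : Fin d => if t = ⟨0, hd⟩ then a else 0) = |a| := by
  unfold l2norm
  rw [sum_sq_ite d hd a, Real.sqrt_sq_eq_abs]

lemma l2_col (d : ℕ) (hd : 1 ≤ d) (v : Fin 4 → ℝ) (k : Fin 4) :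
    l2norm (fun t => Xmat d hd v t k) = |v k| := by
  simpa [Xmat] using l2_ite d hd (v k)

lemma l2_col_sub (d : ℕ) (hd : 1 ≤ d) (v w : Fin 4 → ℝ) (k l : Fin 4) :
    l2norm (fun t => Xmat d hd v t k - Xmat d hd w t l) = |v k - w l| := by
  have h : (fun t : Fin d => Xmat d hd v t k - Xmat d hd w t l)
      = fun t => if t = ⟨0, hd⟩ then v k - w l else 0 := by
    funext t; simp only [Xmat, Matrix.of_apply]; split <;> simp
  rw [h, l2_ite]

lemma Xcol_ne (d : ℕ) (hd : 1 ≤ d) (v w : Fin 4 → ℝ) (k l : Fin 4)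
    (h : (fun t => Xmat d hd v t k) ≠ (fun t => Xmat d hd w t l)) : v k ≠ w l := by
  intro hEq
  apply h
  funext t
  simp [Xmat, hEq]

theorem statement0 (d s : ℕ) (hd : 1 ≤ d) (hs : 1 ≤ s) :
    ∃ (n : ℕ) (X1 X2 : Matrix (Fin d) (Fin n) ℝ) (rmin rmax ε : ℝ) (k l : Fin n),
      0 < rmin ∧ rmin < rmax ∧ 0 < ε ∧
      TokSep rmin rmax ε ![X1, X2] ∧
      (∀ k' l' : Fin n, k' ≠ l' → (fun t => X1 t k') ≠ (fun t => X1 t l')) ∧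
      (∀ k' l' : Fin n, k' ≠ l' → (fun t => X2 t k') ≠ (fun t => X2 t l')) ∧
      vocab X1 ≠ vocab X2 ∧
      (fun t => X1 t k) = (fun t => X2 t l) ∧
      ∀ (h : ℕ), 1 ≤ h →
        ∀ (WO : Fin h → Matrix (Fin d) (Fin s) ℝ)
          (WV WK WQ : Fin h → Matrix (Fin s) (Fin d) ℝ),
          (∀ t, attnH WO WV WK WQ X1 t k = attnH WO WV WK WQ X2 t l) ∧
          ∀ r δ : ℝ, 0 < r → 0 < δ →
            ¬ ContextualMapping ![X1, X2] (attnH WO WV WK WQ) r δ := by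
  have hvoc : vocab (Xmat d hd ![1,2,8,9]) ≠ vocab (Xmat d hd ![1,3,7,9]) := by
    intro hEq
    have hmem : (fun t : Fin d => if t = ⟨0, hd⟩ then (2:ℝ) else 0)
        ∈ vocab (Xmat d hd ![1,2,8,9]) := by
      refine Finset.mem_image.mpr ⟨1, Finset.mem_univ _, ?_⟩
      funext t; simp [Xmat]
    rw [hEq] at hmem
    obtain ⟨k, -, hk⟩ := Finset.mem_image.mp hmem
    have hval := congrFun hk (⟨0, hd⟩ : Fin d)
    simp only [Xmat, Matrix.of_apply, if_pos rfl] at hval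
    fin_cases k <;> norm_num at hval
  refine ⟨4, Xmat d hd ![1,2,8,9], Xmat d hd ![1,3,7,9], 1/2, 10, 1/2, 0, 0,
    by norm_num, by norm_num, by norm_num, ?_, ?_, ?_, hvoc, ?_, ?_⟩
  · refine ⟨?_, ?_, ?_⟩
    · intro i k
      fin_cases i <;>
        simp only [Fin.zero_eta, Fin.mk_one, Matrix.cons_val_zero, Matrix.cons_val_one, Matrix.head_cons] <;>
        rw [l2_col] <;> fin_cases k <;> norm_num
    · intro i k
      fin_cases i <;>
        simp only [Fin.zero_eta, Fin.mk_one, Matrix.cons_val_zero, Matrix.cons_val_one, Matrix.head_cons] <;>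
        rw [l2_col] <;> fin_cases k <;> norm_num
    · intro i j k l hne
      fin_cases i <;> fin_cases j <;>
        simp only [Fin.zero_eta, Fin.mk_one, Matrix.cons_val_zero, Matrix.cons_val_one, Matrix.head_cons] at hne ⊢ <;>
        (rw [l2_col_sub]
         have hv := Xcol_ne d hd _ _ _ _ hne
         revert hv
         fin_cases k <;> fin_cases l <;> rw [lt_abs] <;> norm_num)
  · intro k' l' hkl hEq
    have hval := congrFun hEq (⟨0, hd⟩ : Fin d)
    simp only [Xmat, Matrix.of_apply, if_pos rfl] at hval
    fin_cases k' <;> fin_cases l' <;> first | exact hkl rfl | norm_num at hval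
  · intro k' l' hkl hEq
    have hval := congrFun hEq (⟨0, hd⟩ : Fin d)
    simp only [Xmat, Matrix.of_apply, if_pos rfl] at hval
    fin_cases k' <;> fin_cases l' <;> first | exact hkl rfl | norm_num at hval
  · funext t; simp [Xmat]
  · intro h hh WO WV WK WQ
    have key : ∀ t, attnH WO WV WK WQ (Xmat d hd ![1,2,8,9]) t 0
        = attnH WO WV WK WQ (Xmat d hd ![1,3,7,9]) t 0 := by
      intro t
      simp only [attnH, Matrix.add_apply, Matrix.sum_apply]
      have h1 : Xmat d hd ![1,2,8,9] t 0 = Xmat d hd ![1,3,7,9] t 0 := by simp [Xmat]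
      have h2 : ∑ i : Fin h, (WO i * (WV i * Xmat d hd ![1,2,8,9]) *
            hardmaxCols ((WK i * Xmat d hd ![1,2,8,9])ᵀ * (WQ i * Xmat d hd ![1,2,8,9]))) t 0
          = ∑ i : Fin h, (WO i * (WV i * Xmat d hd ![1,3,7,9]) *
            hardmaxCols ((WK i * Xmat d hd ![1,3,7,9])ᵀ * (WQ i * Xmat d hd ![1,3,7,9]))) t 0 := by
        refine Finset.sum_congr rfl fun i _ => ?_
        rw [head_col d s hd (WO i) (WV i) (WK i) (WQ i) ![1,2,8,9]
              (by norm_num) (by norm_num) (by norm_num [Matrix.cons_val_two, Matrix.cons_val_three, Matrix.vecHead, Matrix.vecTail]) (by norm_num [Matrix.cons_val_two, Matrix.cons_val_three, Matrix.vecHead, Matrix.vecTail]) t,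
            head_col d s hd (WO i) (WV i) (WK i) (WQ i) ![1,3,7,9]
              (by norm_num) (by norm_num) (by norm_num [Matrix.cons_val_two, Matrix.cons_val_three, Matrix.vecHead, Matrix.vecTail]) (by norm_num [Matrix.cons_val_two, Matrix.cons_val_three, Matrix.vecHead, Matrix.vecTail]) t]
        norm_num [Matrix.cons_val_two, Matrix.cons_val_three, Matrix.vecHead, Matrix.vecTail]
      rw [h1, h2]
    refine ⟨key, ?_⟩
    rintro r δ hr hδ ⟨-, hsep⟩
    have hcontra := hsep 0 1 0 0 (Or.inl (by
      simp only [Fin.zero_eta, Fin.mk_one, Matrix.cons_val_zero, Matrix.cons_val_one, Matrix.head_cons]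
      exact hvoc))
    simp only [Fin.zero_eta, Fin.mk_one, Matrix.cons_val_zero, Matrix.cons_val_one, Matrix.head_cons] at hcontra
    have h0 : (fun t => attnH WO WV WK WQ (Xmat d hd ![1,2,8,9]) t 0
        - attnH WO WV WK WQ (Xmat d hd ![1,3,7,9]) t 0) = fun _ => (0:ℝ) := by
      funext t; rw [key t]; ring
    rw [h0] at hcontra
    simp [l2norm] at hcontra
    linarith

end
end

section
/- Let n ≥ 2 and let a⁽¹⁾,…,a⁽ᵐ⁾ ∈ ℝⁿ be vectors such that (i) |a⁽ⁱ⁾_k| < r for all i ∈ [m], k ∈ [n]; (ii) |a⁽ⁱ⁾_k − a⁽ʲ⁾_l| > δ for all i, j ∈ [m] and k, l ∈ [n] with a⁽ⁱ⁾_k ≠ a⁽ʲ⁾_l; (iii) no vector a⁽ⁱ⁾ has a duplicate element; and (iv) δ > 2 log n + 3. Then for all i, j ∈ [m]: |Boltz(a⁽ⁱ⁾)| ≤ r, and if a⁽ⁱ⁾ is not a permutation of a⁽ʲ⁾ (in particular if a⁽ⁱ⁾ ≠ a⁽ʲ⁾ after sorting into decreasing order), then |Boltz(a⁽ⁱ⁾)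 − Boltz(a⁽ʲ⁾)| > (log n)² e^{−2r}. -/
open scoped BigOperators Classical
open Matrix

noncomputable section

lemma xexp_anti {g x : ℝ} (h1 : 1 ≤ g) (hgx : g ≤ x) :
    x * Real.exp (-x) ≤ g * Real.exp (-g) := by
  have h := Real.add_one_le_exp (x - g)
  have e1 : Real.exp (-x) * Real.exp (x - g) = Real.exp (-g) := by
    rw [← Real.exp_add]; ring_nf
  have key : x ≤ g * Real.exp (x - g) := by nlinarith
  calc x * Real.exp (-x) ≤ (g * Real.exp (x - g)) * Real.exp (-x) :=
        mul_le_mul_of_nonneg_right key (Real.exp_pos _).le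
    _ = g * Real.exp (-g) := by rw [mul_assoc, mul_comm (Real.exp (x-g))]; rw [e1]

lemma packing (δ : ℝ) (hδ : 0 < δ) :
    ∀ (V : Finset ℝ) (hV : V.Nonempty),
      (∀ u ∈ V, ∀ w ∈ V, u ≠ w → δ < |u - w|) →
      ((V.card : ℝ) - 1) * δ ≤ V.max' hV - V.min' hV := by
  intro V
  induction V using Finset.strongInduction with
  | _ V ih =>
    intro hV hsep
    rcases Nat.lt_or_ge V.card 2 with hc | hc
    · have h1 : V.card = 1 := le_antisymm (by omega) (Finset.card_pos.mpr hV)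
      have := V.min'_le (V.max' hV) (V.max'_mem hV)
      rw [h1]; push_cast; nlinarith
    · set m := V.min' hV with hm
      have hmV : m ∈ V := V.min'_mem hV
      set V' := V.erase m with hV'
      have hcard : V'.card = V.card - 1 := Finset.card_erase_of_mem hmV
      have hV'ne : V'.Nonempty := Finset.card_pos.mp (by omega)
      have hsub : V' ⊂ V := Finset.erase_ssubset hmV
      have ihV := ih V' hsub hV'ne (fun u hu w hw hne =>
        hsep u (Finset.mem_of_mem_erase hu) w (Finset.mem_of_mem_erase hw) hne)
      have hminV' : m + δ ≤ V'.min' hV'ne := by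
        have hmem : V'.min' hV'ne ∈ V' := V'.min'_mem hV'ne
        have hne : V'.min' hV'ne ≠ m := Finset.ne_of_mem_erase hmem
        have h1 : δ < |V'.min' hV'ne - m| := hsep _ (Finset.mem_of_mem_erase hmem) m hmV hne
        have h2 : m ≤ V'.min' hV'ne := V.min'_le _ (Finset.mem_of_mem_erase hmem)
        rw [abs_of_nonneg (by linarith)] at h1; linarith
      have hmaxle : V'.max' hV'ne ≤ V.max' hV :=
        Finset.max'_subset hV'ne (Finset.erase_subset _ _)
      have hcc : (1:ℝ) ≤ (V.card : ℝ) := by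
        have := Finset.card_pos.mpr hV; exact_mod_cast this
      have hcast : ((V'.card : ℝ)) = (V.card : ℝ) - 1 := by
        rw [hcard, Nat.cast_sub (by omega)]; simp
      rw [hcast] at ihV
      linarith

lemma exists_perm {n : ℕ} {x y : Fin n → ℝ} (hx : Function.Injective x)
    (hy : Function.Injective y)
    (h : Finset.image x Finset.univ = Finset.image y Finset.univ) :
    ∃ σ : Equiv.Perm (Fin n), x = y ∘ σ := by
  have hmem : ∀ k, ∃ l, y l = x k := by
    intro k
    have : x k ∈ Finset.image y Finset.univ :=
      h ▸ Finset.mem_image_of_mem x (Finset.mem_univ k)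
    simpa using Finset.mem_image.mp this
  choose σ hσ using hmem
  have hinj : Function.Injective σ := fun k l hkl => hx (by rw [← hσ k, ← hσ l, hkl])
  exact ⟨Equiv.ofBijective σ (Finite.injective_iff_bijective.mp hinj),
    funext fun k => (hσ k).symm⟩


lemma sum_exp_pos {n : ℕ} (hn : 0 < n) (x : Fin n → ℝ) :
    0 < ∑ k, Real.exp (x k) := by
  apply Finset.sum_pos (fun k _ => Real.exp_pos _)
  exact ⟨⟨0, hn⟩, Finset.mem_univ _⟩

lemma boltz_div {n : ℕ} (hn : 0 < n) (x : Fin n → ℝ) :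
    boltz x = (∑ k, x k * Real.exp (x k)) / (∑ k, Real.exp (x k)) := by
  unfold boltz softmax
  rw [Finset.sum_div]
  exact Finset.sum_congr rfl fun k _ => by rw [mul_div_assoc]

lemma abs_boltz_le {n : ℕ} (hn : 0 < n) (x : Fin n → ℝ) (r : ℝ)
    (h : ∀ k, |x k| < r) : |boltz x| ≤ r := by
  have hT := sum_exp_pos hn x
  have hsm : ∀ k, 0 ≤ softmax x k := fun k =>
    div_nonneg (Real.exp_pos _).le hT.le
  have hsum1 : ∑ k, softmax x k = 1 := by
    unfold softmax; rw [← Finset.sum_div, div_self hT.ne']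
  calc |boltz x| ≤ ∑ k, |x k * softmax x k| := Finset.abs_sum_le_sum_abs _ _
    _ ≤ ∑ k, r * softmax x k := by
        apply Finset.sum_le_sum
        intro k _
        rw [abs_mul, abs_of_nonneg (hsm k)]
        exact mul_le_mul_of_nonneg_right (h k).le (hsm k)
    _ = r := by rw [← Finset.mul_sum, hsum1, mul_one]

lemma boltz_le_of {n : ℕ} (hn : 0 < n) (x : Fin n → ℝ) (c : ℝ)
    (h : ∀ k, x k ≤ c) : boltz x ≤ c := by
  have hT := sum_exp_pos hn x
  have hsm : ∀ k, 0 ≤ softmax x k := fun k =>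
    div_nonneg (Real.exp_pos _).le hT.le
  have hsum1 : ∑ k, softmax x k = 1 := by
    unfold softmax; rw [← Finset.sum_div, div_self hT.ne']
  calc boltz x ≤ ∑ k, c * softmax x k :=
        Finset.sum_le_sum fun k _ => mul_le_mul_of_nonneg_right (h k) (hsm k)
    _ = c := by rw [← Finset.mul_sum, hsum1, mul_one]

lemma boltz_eq_sub {n : ℕ} (hn : 0 < n) (x : Fin n → ℝ) (M : ℝ) :
    boltz x = M - (∑ k, (M - x k) * Real.exp (x k - M)) / (∑ k, Real.exp (x k - M)) := by
  have hT := sum_exp_pos hn x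
  have hM := Real.exp_pos M
  have e1 : ∑ k, Real.exp (x k - M) = (∑ k, Real.exp (x k)) / Real.exp M := by
    rw [Finset.sum_div]
    exact Finset.sum_congr rfl fun k _ => by rw [Real.exp_sub]
  have e2 : ∑ k, (M - x k) * Real.exp (x k - M)
      = (M * (∑ k, Real.exp (x k)) - ∑ k, x k * Real.exp (x k)) / Real.exp M := by
    rw [Finset.mul_sum, ← Finset.sum_sub_distrib, Finset.sum_div]
    exact Finset.sum_congr rfl fun k _ => by rw [Real.exp_sub]; field_simp
  rw [boltz_div hn, e1, e2]
  field_simp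
  ring

set_option maxHeartbeats 1000000 in
lemma key {n : ℕ} (hn : 2 ≤ n) (r δ : ℝ) (x y : Fin n → ℝ)
    (hinjx : Function.Injective x) (hinjy : Function.Injective y)
    (habs : ∀ u ∈ Finset.image x Finset.univ ∪ Finset.image y Finset.univ, |u| < r)
    (hsepF : ∀ u ∈ Finset.image x Finset.univ ∪ Finset.image y Finset.univ,
      ∀ w ∈ Finset.image x Finset.univ ∪ Finset.image y Finset.univ, u ≠ w → δ < |u - w|)
    (hδ : 2 * Real.log n + 3 < δ)
    (v : ℝ) (hvX : v ∈ Finset.image x Finset.univ) (hvY : v ∉ Finset.image y Finset.univ)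
    (hvmax : ∀ u ∈ Finset.image x Finset.univ ∪ Finset.image y Finset.univ,
      u ∉ Finset.image x Finset.univ ∩ Finset.image y Finset.univ → u ≤ v) :
    (Real.log n) ^ 2 * Real.exp (-2 * r) < |boltz x - boltz y| := by
  have hn0 : 0 < n := by omega
  set X := Finset.image x Finset.univ with hX
  set Y := Finset.image y Finset.univ with hY
  have hXne : X.Nonempty := ⟨x ⟨0, hn0⟩, Finset.mem_image_of_mem x (Finset.mem_univ _)⟩
  have hUne : (X ∪ Y).Nonempty := hXne.mono Finset.subset_union_left
  set M := (X ∪ Y).max' hUne with hM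
  have hMmem : M ∈ X ∪ Y := (X ∪ Y).max'_mem hUne
  have hleM : ∀ u ∈ X ∪ Y, u ≤ M := fun u hu => (X ∪ Y).le_max' u hu
  have cardX : X.card = n := by
    rw [hX, Finset.card_image_of_injective _ hinjx, Finset.card_univ, Fintype.card_fin]
  have hlog : 0 < Real.log n := Real.log_pos (by exact_mod_cast hn)
  have hlogn1 : Real.log n ≤ (n : ℝ) - 1 := by
    have := Real.add_one_le_exp (Real.log n)
    rw [Real.exp_log (by positivity)] at this
    linarith
  have hδ3 : 3 < δ := by nlinarith
  have hδ1 : (1:ℝ) ≤ δ := by linarith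
  -- spread bound
  have hspread : ((n:ℝ) - 1) * δ ≤ X.max' hXne - X.min' hXne := by
    have := packing δ (by linarith) X hXne (fun u hu w hw hne =>
      hsepF u (Finset.mem_union_left _ hu) w (Finset.mem_union_left _ hw) hne)
    rwa [cardX] at this
  have hr2 : ((n:ℝ) - 1) * δ < 2 * r := by
    have h1 := habs _ (Finset.mem_union_left _ (X.max'_mem hXne))
    have h2 := habs _ (Finset.mem_union_left _ (X.min'_mem hXne))
    rw [abs_lt] at h1 h2
    linarith
  have hn1 : (1:ℝ) ≤ (n:ℝ) - 1 := by
    have : (2:ℝ) ≤ (n:ℝ) := by exact_mod_cast hn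
    linarith
  have hδ2r : δ < 2 * r := by nlinarith
  have hrpos : 0 < r := by nlinarith
  have hL2r : (Real.log n) ^ 2 < r := by nlinarith [mul_le_mul_of_nonneg_right hlogn1 (by linarith : (0:ℝ) ≤ δ)]
  have hexp3 : Real.exp (-3) < 1/20 := by
    have h9 := Real.exp_one_gt_d9
    have h3 : Real.exp 3 = Real.exp 1 ^ (3:ℕ) := by
      rw [← Real.exp_nat_mul]; norm_num
    have hp : (2.7182818283:ℝ)^(3:ℕ) ≤ Real.exp 1 ^ (3:ℕ) :=
      pow_le_pow_left₀ (by norm_num) h9.le 3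
    have h20 : (20:ℝ) < Real.exp 3 := by rw [h3]; nlinarith
    rw [Real.exp_neg]
    rw [inv_lt_comm₀ (by positivity) (by norm_num)]
    linarith
  have hεb : (n:ℝ) * Real.exp (-δ) ≤ 1/40 := by
    have e2 : Real.exp (2 * Real.log n) = (n:ℝ)^2 := by
      rw [show (2:ℝ) * Real.log n = ((2:ℕ):ℝ) * Real.log n by norm_num,
        Real.exp_nat_mul, Real.exp_log (by positivity)]
    have hlt : Real.exp (-δ) < Real.exp (-3) / (n:ℝ)^2 := by
      have : Real.exp (-δ) < Real.exp (-(2 * Real.log n + 3)) :=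
        Real.exp_lt_exp.mpr (by linarith)
      rw [show -(2 * Real.log n + 3) = (-3) + (-(2 * Real.log n)) by ring,
        Real.exp_add, Real.exp_neg (2 * Real.log n), e2] at this
      rw [div_eq_mul_inv]
      exact this
    have hnr : (2:ℝ) ≤ (n:ℝ) := by exact_mod_cast hn
    have hnpos : (0:ℝ) < (n:ℝ) := by linarith
    have : (n:ℝ) * Real.exp (-δ) < (n:ℝ) * (Real.exp (-3) / (n:ℝ)^2) :=
      mul_lt_mul_of_pos_left hlt hnpos
    have heq : (n:ℝ) * (Real.exp (-3) / (n:ℝ)^2) = Real.exp (-3) / (n:ℝ) := by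
      field_simp
    rw [heq] at this
    have : Real.exp (-3) / (n:ℝ) ≤ Real.exp (-3) / 2 :=
      div_le_div_of_nonneg_left (Real.exp_pos _).le (by norm_num) hnr
    nlinarith [Real.exp_pos (-3)]
  -- boltz identities
  have himx : ∀ f : ℝ → ℝ, ∑ u ∈ X, f u = ∑ k, f (x k) := fun f =>
    Finset.sum_image (fun a _ b _ h => hinjx h)
  have himy : ∀ f : ℝ → ℝ, ∑ u ∈ Y, f u = ∑ k, f (y k) := fun f =>
    Finset.sum_image (fun a _ b _ h => hinjy h)
  have hbx : boltz x
      = M - (∑ u ∈ X, (M - u) * Real.exp (u - M)) / (∑ u ∈ X, Real.exp (u - M)) := by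
    rw [himx, himx, boltz_eq_sub hn0 x M]
  have hby : boltz y
      = M - (∑ u ∈ Y, (M - u) * Real.exp (u - M)) / (∑ u ∈ Y, Real.exp (u - M)) := by
    rw [himy, himy, boltz_eq_sub hn0 y M]
  by_cases hvM : v = M
  · -- Case A : the top value is in X only
    subst hvM
    have hyle : ∀ k, y k ≤ M - δ := by
      intro k
      have hkY : y k ∈ Y := Finset.mem_image_of_mem y (Finset.mem_univ k)
      have hne : y k ≠ M := fun h => hvY (h ▸ hkY)
      have hs := hsepF (y k) (Finset.mem_union_right _ hkY) M
        (Finset.mem_union_left _ hvX) hne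
      have hle : y k ≤ M := hleM (y k) (Finset.mem_union_right _ hkY)
      rw [abs_of_nonpos (by linarith)] at hs
      linarith
    have hbolty : boltz y ≤ M - δ := boltz_le_of hn0 y _ hyle
    have hfX1 : (1:ℝ) ≤ ∑ u ∈ X, Real.exp (u - M) := by
      have h1 := Finset.single_le_sum (f := fun u => Real.exp (u - M))
        (fun i _ => (Real.exp_pos _).le) hvX
      simpa using h1
    have hwnn : 0 ≤ ∑ u ∈ X, (M - u) * Real.exp (u - M) :=
      Finset.sum_nonneg fun u hu => mul_nonneg
        (by linarith [hleM u (Finset.mem_union_left _ hu)]) (Real.exp_pos _).le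
    have hwle : ∑ u ∈ X, (M - u) * Real.exp (u - M) ≤ (n:ℝ) * (δ * Real.exp (-δ)) := by
      rw [← Finset.add_sum_erase X _ hvX]
      have h00 : (M - M) * Real.exp (M - M) = 0 := by simp
      rw [h00, zero_add]
      have hb : ∀ u ∈ X.erase M, (M - u) * Real.exp (u - M) ≤ δ * Real.exp (-δ) := by
        intro u hu
        have huX := Finset.mem_of_mem_erase hu
        have hune : u ≠ M := Finset.ne_of_mem_erase hu
        have hs := hsepF u (Finset.mem_union_left _ huX) M (Finset.mem_union_left _ hvX) hune
        have huM : u ≤ M := hleM u (Finset.mem_union_left _ huX)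
        rw [abs_of_nonpos (by linarith)] at hs
        have h2 : δ ≤ M - u := by linarith
        have h3 := xexp_anti hδ1 h2
        rw [show u - M = -(M - u) by ring]
        exact h3
      have hsum := Finset.sum_le_card_nsmul (X.erase M) _ _ hb
      rw [nsmul_eq_mul] at hsum
      have hcard : ((X.erase M).card : ℝ) ≤ (n:ℝ) := by
        have h4 : (X.erase M).card ≤ n := le_trans Finset.card_erase_le (le_of_eq cardX)
        exact_mod_cast h4
      have hδe : 0 ≤ δ * Real.exp (-δ) := by positivity
      have h6 := mul_le_mul_of_nonneg_right hcard hδe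
      linarith
    have hdivle : (∑ u ∈ X, (M - u) * Real.exp (u - M)) / (∑ u ∈ X, Real.exp (u - M))
        ≤ δ / 40 := by
      have h5 : (∑ u ∈ X, (M - u) * Real.exp (u - M)) / (∑ u ∈ X, Real.exp (u - M))
          ≤ ∑ u ∈ X, (M - u) * Real.exp (u - M) := div_le_self hwnn hfX1
      have h6 := mul_le_mul_of_nonneg_left hεb (by linarith : (0:ℝ) ≤ δ)
      have h7 : (n:ℝ) * (δ * Real.exp (-δ)) = δ * ((n:ℝ) * Real.exp (-δ)) := by ring
      linarith
    have hbxlow : M - δ/40 ≤ boltz x := by rw [hbx]; linarith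
    have hdiff : 39/40*δ ≤ boltz x - boltz y := by linarith
    have hRH1 : (Real.log n)^2 * Real.exp (-2*r) ≤ ((δ-3)/2)^2 * Real.exp (-δ) := by
      apply mul_le_mul
      · exact pow_le_pow_left₀ hlog.le (by linarith) 2
      · exact Real.exp_le_exp.mpr (by linarith)
      · positivity
      · positivity
    have hδe3 : δ * Real.exp (-δ) ≤ 3 * Real.exp (-3) := xexp_anti (by norm_num) (by linarith)
    have hfin : ((δ-3)/2)^2 * Real.exp (-δ) < 39/40*δ := by
      have hA := mul_le_mul_of_nonneg_left hδe3 (by linarith : (0:ℝ) ≤ δ)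
      have hB := mul_le_mul_of_nonneg_left
        (by linarith : 3 * Real.exp (-3) ≤ 3/20) (by linarith : (0:ℝ) ≤ δ)
      have hC := mul_nonneg (by linarith : (0:ℝ) ≤ 6*δ - 9) (Real.exp_pos (-δ)).le
      nlinarith [hA, hB, hC]
    calc (Real.log n)^2 * Real.exp (-2*r) ≤ ((δ-3)/2)^2 * Real.exp (-δ) := hRH1
      _ < 39/40*δ := hfin
      _ ≤ boltz x - boltz y := hdiff
      _ ≤ |boltz x - boltz y| := le_abs_self _
  · -- Case B
    have hvltM : v < M := lt_of_le_of_ne (hleM v (Finset.mem_union_left _ hvX)) hvM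
    have hMXY : M ∈ X ∩ Y := by
      by_contra hc
      exact absurd (hvmax M hMmem hc) (not_le.mpr hvltM)
    have hMX : M ∈ X := (Finset.mem_inter.mp hMXY).1
    have hMY : M ∈ Y := (Finset.mem_inter.mp hMXY).2
    have cardY : Y.card = n := by
      rw [hY, Finset.card_image_of_injective _ hinjy, Finset.card_univ, Fintype.card_fin]
    have htδ : δ < M - v := by
      have hs := hsepF v (Finset.mem_union_left _ hvX) M hMmem hvM
      rw [abs_of_nonpos (by linarith)] at hs; linarith
    have ht3 : 3 < M - v := by linarith
    have ht2r : M - v < 2*r := by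
      have h1 := habs M hMmem
      have h2 := habs v (Finset.mem_union_left _ hvX)
      rw [abs_lt] at h1 h2; linarith
    have hP : X.filter (fun u => v < u) = Y.filter (fun u => v < u) := by
      ext u
      simp only [Finset.mem_filter]
      constructor
      · rintro ⟨huX, hlt⟩
        refine ⟨?_, hlt⟩
        by_contra huY
        have hu : u ∉ X ∩ Y := fun hmem => huY (Finset.mem_inter.mp hmem).2
        exact absurd (hvmax u (Finset.mem_union_left _ huX) hu) (not_le.mpr hlt)
      · rintro ⟨huY, hlt⟩
        refine ⟨?_, hlt⟩
        by_contra huX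
        have hu : u ∉ X ∩ Y := fun hmem => huX (Finset.mem_inter.mp hmem).1
        exact absurd (hvmax u (Finset.mem_union_right _ huY) hu) (not_le.mpr hlt)
    have hvmemf : v ∈ X.filter (fun u => ¬ v < u) :=
      Finset.mem_filter.mpr ⟨hvX, lt_irrefl v⟩
    have hsplitX : ∀ f : ℝ → ℝ, ∑ u ∈ X, f u
        = (∑ u ∈ X.filter (fun u => v < u), f u)
          + (f v + ∑ u ∈ (X.filter (fun u => ¬ v < u)).erase v, f u) := by
      intro f
      rw [← Finset.sum_filter_add_sum_filter_not X (fun u => v < u) f]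
      congr 1
      rw [← Finset.add_sum_erase _ f hvmemf]
    have hsplitY : ∀ f : ℝ → ℝ, ∑ u ∈ Y, f u
        = (∑ u ∈ X.filter (fun u => v < u), f u)
          + ∑ u ∈ Y.filter (fun u => ¬ v < u), f u := by
      intro f
      rw [← Finset.sum_filter_add_sum_filter_not Y (fun u => v < u) f, hP]
    -- generic tail bounds
    have hgen : ∀ (S : Finset ℝ) (c : ℝ), S.card ≤ n → (∀ u ∈ S, u ≤ M - c) → 1 ≤ c →
        (0 ≤ ∑ u ∈ S, Real.exp (u - M) ∧ ∑ u ∈ S, Real.exp (u - M) ≤ (n:ℝ) * Real.exp (-c))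
        ∧ (0 ≤ ∑ u ∈ S, (M - u) * Real.exp (u - M)
            ∧ ∑ u ∈ S, (M - u) * Real.exp (u - M) ≤ (n:ℝ) * (c * Real.exp (-c))) := by
      intro S c hcard hle hc1
      have hcc : (S.card : ℝ) ≤ (n:ℝ) := by exact_mod_cast hcard
      constructor
      · constructor
        · exact Finset.sum_nonneg fun u hu => (Real.exp_pos _).le
        · have hb : ∀ u ∈ S, Real.exp (u - M) ≤ Real.exp (-c) := fun u hu =>
            Real.exp_le_exp.mpr (by linarith [hle u hu])
          have hsum := Finset.sum_le_card_nsmul S _ _ hb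
          rw [nsmul_eq_mul] at hsum
          have := mul_le_mul_of_nonneg_right hcc (Real.exp_pos (-c)).le
          linarith
      · constructor
        · exact Finset.sum_nonneg fun u hu =>
            mul_nonneg (by linarith [hle u hu, hc1]) (Real.exp_pos _).le
        · have hb : ∀ u ∈ S, (M - u) * Real.exp (u - M) ≤ c * Real.exp (-c) := by
            intro u hu
            have h2 : c ≤ M - u := by linarith [hle u hu]
            have h3 := xexp_anti hc1 h2
            rw [show u - M = -(M - u) by ring]
            exact h3
          have hsum := Finset.sum_le_card_nsmul S _ _ hb
          rw [nsmul_eq_mul] at hsum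
          have hpos : 0 ≤ c * Real.exp (-c) := by positivity
          have := mul_le_mul_of_nonneg_right hcc hpos
          linarith
    -- element bounds for the three tails
    have hPer : ∀ u ∈ (X.filter (fun u => v < u)).erase M, u ≤ M - δ := by
      intro u hu
      have huf := Finset.mem_of_mem_erase hu
      have huX : u ∈ X := (Finset.mem_filter.mp huf).1
      have hune : u ≠ M := Finset.ne_of_mem_erase hu
      have hs := hsepF u (Finset.mem_union_left _ huX) M hMmem hune
      have huM : u ≤ M := hleM u (Finset.mem_union_left _ huX)
      rw [abs_of_nonpos (by linarith)] at hs
      linarith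
    have hLxe : ∀ u ∈ (X.filter (fun u => ¬ v < u)).erase v, u ≤ M - ((M - v) + δ) := by
      intro u hu
      have huf := Finset.mem_of_mem_erase hu
      have huX : u ∈ X := (Finset.mem_filter.mp huf).1
      have hulev : ¬ v < u := (Finset.mem_filter.mp huf).2
      have hune : u ≠ v := Finset.ne_of_mem_erase hu
      have hs := hsepF u (Finset.mem_union_left _ huX) v (Finset.mem_union_left _ hvX) hune
      rw [abs_of_nonpos (by push_neg at hulev; linarith)] at hs
      linarith
    have hLye : ∀ u ∈ Y.filter (fun u => ¬ v < u), u ≤ M - ((M - v) + δ) := by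
      intro u hu
      have huY : u ∈ Y := (Finset.mem_filter.mp hu).1
      have hulev : ¬ v < u := (Finset.mem_filter.mp hu).2
      have hune : u ≠ v := fun h => hvY (h ▸ huY)
      have hs := hsepF u (Finset.mem_union_right _ huY) v (Finset.mem_union_left _ hvX) hune
      rw [abs_of_nonpos (by push_neg at hulev; linarith)] at hs
      linarith
    -- card bounds
    have hcPer : ((X.filter (fun u => v < u)).erase M).card ≤ n :=
      le_trans Finset.card_erase_le (le_trans (Finset.card_filter_le _ _) cardX.le)
    have hcLx : ((X.filter (fun u => ¬ v < u)).erase v).card ≤ n :=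
      le_trans Finset.card_erase_le (le_trans (Finset.card_filter_le _ _) cardX.le)
    have hcLy : (Y.filter (fun u => ¬ v < u)).card ≤ n :=
      le_trans (Finset.card_filter_le _ _) cardY.le
    have hc1 : (1:ℝ) ≤ (M - v) + δ := by linarith
    obtain ⟨⟨hfPe0, hfPe1⟩, ⟨hwPe0, hwPe1⟩⟩ := hgen _ δ hcPer hPer hδ1
    obtain ⟨⟨hfLx0, hfLx1⟩, ⟨hwLx0, hwLx1⟩⟩ := hgen _ ((M - v) + δ) hcLx hLxe hc1
    obtain ⟨⟨hfLy0, hfLy1⟩, ⟨hwLy0, hwLy1⟩⟩ := hgen _ ((M - v) + δ) hcLy hLye hc1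
    have hMP : M ∈ X.filter (fun u => v < u) := Finset.mem_filter.mpr ⟨hMX, hvltM⟩
    have hfPsplit : ∑ u ∈ X.filter (fun u => v < u), Real.exp (u - M)
        = Real.exp (M - M) + ∑ u ∈ (X.filter (fun u => v < u)).erase M, Real.exp (u - M) :=
      (Finset.add_sum_erase _ _ hMP).symm
    have hwPsplit : ∑ u ∈ X.filter (fun u => v < u), (M - u) * Real.exp (u - M)
        = (M - M) * Real.exp (M - M)
          + ∑ u ∈ (X.filter (fun u => v < u)).erase M, (M - u) * Real.exp (u - M) :=
      (Finset.add_sum_erase _ _ hMP).symm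
    -- instantiate splits
    have hwXs := hsplitX (fun u => (M - u) * Real.exp (u - M))
    have hfXs := hsplitX (fun u => Real.exp (u - M))
    have hwYs := hsplitY (fun u => (M - u) * Real.exp (u - M))
    have hfYs := hsplitY (fun u => Real.exp (u - M))
    -- abbreviations
    set E := Real.exp (v - M) with hEdef
    set t := M - v with htdef
    set ε := (n:ℝ) * Real.exp (-δ) with hεdef
    set fP := ∑ u ∈ X.filter (fun u => v < u), Real.exp (u - M) with hfPdef
    set wP := ∑ u ∈ X.filter (fun u => v < u), (M - u) * Real.exp (u - M) with hwPdef
    set fLx := ∑ u ∈ (X.filter (fun u => ¬ v < u)).erase v, Real.exp (u - M) with hfLxdef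
    set wLx := ∑ u ∈ (X.filter (fun u => ¬ v < u)).erase v, (M - u) * Real.exp (u - M) with hwLxdef
    set fLy := ∑ u ∈ Y.filter (fun u => ¬ v < u), Real.exp (u - M) with hfLydef
    set wLy := ∑ u ∈ Y.filter (fun u => ¬ v < u), (M - u) * Real.exp (u - M) with hwLydef
    clear_value E t ε fP wP fLx wLx fLy wLy
    have hE0 : 0 < E := by rw [hEdef]; exact Real.exp_pos _
    have hEt : E = Real.exp (-t) := by rw [hEdef, htdef]; ring_nf
    have hE20 : E ≤ 1/20 := by
      have h1 : Real.exp (-t) ≤ Real.exp (-3) := Real.exp_le_exp.mpr (by linarith)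
      rw [hEt]; linarith
    have hε0 : 0 < ε := by rw [hεdef]; positivity
    have hconv : (n:ℝ) * Real.exp (-(t + δ)) = ε * E := by
      rw [show -(t + δ) = (-δ) + (v - M) by rw [htdef]; ring, Real.exp_add, hεdef, hEdef]
      ring
    have hwc : (n:ℝ) * (δ * Real.exp (-δ)) = ε * δ := by rw [hεdef]; ring
    have hwc2 : (n:ℝ) * ((t + δ) * Real.exp (-(t + δ))) = (t + δ) * (ε * E) := by
      rw [← hconv]; ring
    -- clean bounds
    have hεE0 : (0:ℝ) ≤ ε * E := le_of_lt (mul_pos hε0 hE0)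
    have ht0 : (0:ℝ) < t := by linarith
    have hfLxb : fLx ≤ ε * E := by rw [← hconv]; exact hfLx1
    have hfLyb : fLy ≤ ε * E := by rw [← hconv]; exact hfLy1
    have htmδ : (0:ℝ) ≤ t - δ := by linarith only [htδ]
    have hwLxb : wLx ≤ 2*t*(ε*E) := by
      nlinarith only [hwLx1, hwc2, mul_nonneg htmδ hεE0]
    have hwLyb : wLy ≤ 2*t*(ε*E) := by
      nlinarith only [hwLy1, hwc2, mul_nonneg htmδ hεE0]
    rw [sub_self, Real.exp_zero] at hfPsplit
    rw [sub_self, Real.exp_zero, zero_mul, zero_add] at hwPsplit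
    have hfP1 : 1 ≤ fP := by rw [hfPsplit]; linarith
    have hfP2 : fP ≤ 1 + ε := by rw [hfPsplit]; linarith
    have hwP0 : 0 ≤ wP := by rw [hwPsplit]; linarith
    have hwP1 : wP ≤ ε * δ := by rw [hwPsplit]; linarith
    -- simple numeric consequences
    have hε40 : (0:ℝ) ≤ 1/40 - ε := by linarith only [hεb]
    have hwPt : wP ≤ t/40 := by
      nlinarith only [hwP1, mul_nonneg hε0.le htmδ, mul_nonneg ht0.le hε40]
    have hεE800 : ε * E ≤ 1/800 := by
      nlinarith only [mul_le_mul hεb hE20 hE0.le (by norm_num : (0:ℝ) ≤ 1/40)]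
    have hfLxE : fLx ≤ E/40 := by
      nlinarith only [hfLxb, mul_nonneg hE0.le hε40]
    have hfLyE : fLy ≤ E/40 := by
      nlinarith only [hfLyb, mul_nonneg hE0.le hε40]
    have hfLx800 : fLx ≤ 1/800 := by linarith only [hfLxb, hεE800]
    have hfLy800 : fLy ≤ 1/800 := by linarith only [hfLyb, hεE800]
    have htE0 : (0:ℝ) < t*E := mul_pos ht0 hE0
    have hwLyt : wLy ≤ (t*E)/20 := by
      nlinarith only [hwLyb, mul_nonneg htE0.le (by linarith only [hεb] : (0:ℝ) ≤ 1/20 - 2*ε)]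
    have hfP41 : fP ≤ 41/40 := by linarith only [hfP2, hεb]
    -- the core estimate
    have hN : (9/10)*(t*E) ≤ (wP + (t*E + wLx))*(fP + fLy) - (wP + wLy)*(fP + (E + fLx)) := by
      have htE20 : (0:ℝ) ≤ (t*E)/20 := by linarith only [htE0]
      have hfP0 : (0:ℝ) ≤ fP := by linarith only [hfP1]
      nlinarith only [htE0.le,
        mul_le_mul_of_nonneg_right hwPt hE0.le,
        mul_le_mul hwPt hfLxE hfLx0 (by linarith only [ht0] : (0:ℝ) ≤ t/40),
        mul_le_mul hwLyt hfP41 hfP0 htE20,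
        mul_le_mul hwLyt hE20 hE0.le htE20,
        mul_le_mul hwLyt hfLx800 hfLx0 htE20,
        mul_le_mul_of_nonneg_left hfP1 htE0.le,
        mul_nonneg hwLx0 hfP0,
        mul_nonneg hwLx0 hfLy0,
        mul_nonneg hwP0 hfLy0,
        mul_nonneg htE0.le hfLy0]
    have hfX0 : (0:ℝ) < fP + (E + fLx) := by linarith only [hfP1, hE0, hfLx0]
    have hfY0 : (0:ℝ) < fP + fLy := by linarith only [hfP1, hfLy0]
    have hfXu : fP + (E + fLx) ≤ 11/10 := by linarith only [hfP41, hE20, hfLx800]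
    have hfYu : fP + fLy ≤ 21/20 := by linarith only [hfP41, hfLy800]
    have hprod : (fP + (E + fLx))*(fP + fLy) ≤ 5/4 := by
      nlinarith only [mul_le_mul hfXu hfYu hfY0.le (by norm_num : (0:ℝ) ≤ 11/10)]
    have hprod0 : 0 < (fP + (E + fLx))*(fP + fLy) := mul_pos hfX0 hfY0
    have hfrac : (18/25)*(t*E)
        ≤ ((wP + (t*E + wLx))*(fP + fLy) - (wP + wLy)*(fP + (E + fLx)))
          / ((fP + (E + fLx))*(fP + fLy)) := by
      rw [le_div_iff₀ hprod0]
      nlinarith only [hN,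
        mul_le_mul_of_nonneg_left hprod (by linarith only [htE0] : (0:ℝ) ≤ (18/25)*(t*E))]
    have hdiv : (wP + (t*E + wLx))/(fP + (E + fLx)) - (wP + wLy)/(fP + fLy)
        = ((wP + (t*E + wLx))*(fP + fLy) - (wP + wLy)*(fP + (E + fLx)))
          / ((fP + (E + fLx))*(fP + fLy)) := by
      field_simp
    have hfinal1 : boltz y - boltz x
        = (wP + (t*E + wLx))/(fP + (E + fLx)) - (wP + wLy)/(fP + fLy) := by
      rw [hbx, hby, hwXs, hfXs, hwYs, hfYs]
      ring
    have hxe2 : 2*r*Real.exp (-(2*r)) ≤ t*Real.exp (-t) := xexp_anti (by linarith) (by linarith)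
    have he1 : Real.exp (-2*r) = Real.exp (-(2*r)) := by rw [neg_mul]
    have hstep : (Real.log n)^2 * Real.exp (-2*r) < (18/25)*(t*E) := by
      have h2 : (Real.log n)^2 * Real.exp (-2*r) < r * Real.exp (-2*r) :=
        mul_lt_mul_of_pos_right hL2r (Real.exp_pos _)
      rw [he1] at h2 ⊢
      have hxe3 : 2*r*Real.exp (-(2*r)) ≤ t*E := by rw [hEt]; exact hxe2
      nlinarith only [h2, hxe3, mul_nonneg hrpos.le (Real.exp_pos (-(2*r))).le]
    calc (Real.log n)^2 * Real.exp (-2*r) < (18/25)*(t*E) := hstep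
      _ ≤ boltz y - boltz x := by rw [hfinal1, hdiv]; exact hfrac
      _ ≤ |boltz x - boltz y| := by rw [abs_sub_comm]; exact le_abs_self _

theorem statement2 (n m : ℕ) (hn : 2 ≤ n) (r δ : ℝ)
    (a : Fin m → Fin n → ℝ)
    (hbound : ∀ i k, |a i k| < r)
    (hsep : ∀ i j k l, a i k ≠ a j l → δ < |a i k - a j l|)
    (hnodup : ∀ i, ∀ k l : Fin n, k ≠ l → a i k ≠ a i l)
    (hδ : 2 * Real.log n + 3 < δ) :
    ∀ i j : Fin m,
      |boltz (a i)| ≤ r ∧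
      ((¬ ∃ σ : Equiv.Perm (Fin n), a i = a j ∘ σ) →
        (Real.log n) ^ 2 * Real.exp (-2 * r) < |boltz (a i) - boltz (a j)|) := by
  intro i j
  have hinj' : ∀ i0 : Fin m, Function.Injective (a i0) := by
    intro i0 k l h
    by_contra hkl
    exact hnodup i0 k l hkl h
  constructor
  · exact abs_boltz_le (by omega) (a i) r (hbound i)
  · intro hperm
    have hXY : Finset.image (a i) Finset.univ ≠ Finset.image (a j) Finset.univ :=
      fun h => hperm (exists_perm (hinj' i) (hinj' j) h)
    set X := Finset.image (a i) Finset.univ with hXdef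
    set Y := Finset.image (a j) Finset.univ with hYdef
    have hD : ((X ∪ Y) \ (X ∩ Y)).Nonempty := by
      rw [Finset.sdiff_nonempty]
      intro hsub
      apply hXY
      apply Finset.Subset.antisymm
      · intro u hu
        exact (Finset.mem_inter.mp (hsub (Finset.mem_union_left _ hu))).2
      · intro u hu
        exact (Finset.mem_inter.mp (hsub (Finset.mem_union_right _ hu))).1
    set v := ((X ∪ Y) \ (X ∩ Y)).max' hD with hv
    have hvmem : v ∈ (X ∪ Y) \ (X ∩ Y) := Finset.max'_mem _ _
    have hvU : v ∈ X ∪ Y := (Finset.mem_sdiff.mp hvmem).1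
    have hvnI : v ∉ X ∩ Y := (Finset.mem_sdiff.mp hvmem).2
    have hvmax : ∀ u ∈ X ∪ Y, u ∉ X ∩ Y → u ≤ v := fun u hu hnu =>
      Finset.le_max' _ u (Finset.mem_sdiff.mpr ⟨hu, hnu⟩)
    have habs' : ∀ u ∈ X ∪ Y, |u| < r := by
      intro u hu
      rcases Finset.mem_union.mp hu with h | h
      · obtain ⟨k, _, rfl⟩ := Finset.mem_image.mp h
        exact hbound i k
      · obtain ⟨k, _, rfl⟩ := Finset.mem_image.mp h
        exact hbound j k
    have hsepF : ∀ u ∈ X ∪ Y, ∀ w ∈ X ∪ Y, u ≠ w → δ < |u - w| := by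
      intro u hu w hw hne
      rcases Finset.mem_union.mp hu with h1 | h1 <;>
        rcases Finset.mem_union.mp hw with h2 | h2 <;>
        · obtain ⟨k, _, rfl⟩ := Finset.mem_image.mp h1
          obtain ⟨l, _, rfl⟩ := Finset.mem_image.mp h2
          exact hsep _ _ k l hne
    have hvmax' : ∀ u ∈ Y ∪ X, u ∉ Y ∩ X → u ≤ v := by
      intro u hu hnu
      rw [Finset.union_comm] at hu
      rw [Finset.inter_comm] at hnu
      exact hvmax u hu hnu
    have habs'' : ∀ u ∈ Y ∪ X, |u| < r := by
      intro u hu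
      rw [Finset.union_comm] at hu
      exact habs' u hu
    have hsepF' : ∀ u ∈ Y ∪ X, ∀ w ∈ Y ∪ X, u ≠ w → δ < |u - w| := by
      intro u hu w hw hne
      rw [Finset.union_comm] at hu hw
      exact hsepF u hu w hw hne
    rcases Finset.mem_union.mp hvU with hvX | hvY'
    · have hvY : v ∉ Y := fun h => hvnI (Finset.mem_inter.mpr ⟨hvX, h⟩)
      exact key hn r δ (a i) (a j) (hinj' i) (hinj' j) habs' hsepF hδ v hvX hvY hvmax
    · have hvX : v ∉ X := fun h => hvnI (Finset.mem_inter.mpr ⟨h, hvY'⟩)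
      have hres := key hn r δ (a j) (a i) (hinj' j) (hinj' i) habs'' hsepF' hδ v hvY' hvX hvmax'
      rwa [abs_sub_comm] at hres

end
end

section
/- For every n ≥ 1, every i ∈ [n], and every a ∈ ℝⁿ, the partial derivative of the Boltzmann operator with respect to a_i equals ∂Boltz(a)/∂a_i = p_i · (1 + log p_i + 𝒮(p)), where p = σ_S[a]. -/
open scoped BigOperators Classical
open Matrix

noncomputable section

lemma sum_update_aux {n : ℕ} (a : Fin n → ℝ) (i : Fin n) (x : ℝ) (h : ℝ → ℝ) :
    ∑ j, h (Function.update a i x j) =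
      h x + ∑ j ∈ Finset.univ.erase i, h (a j) := by
  rw [← Finset.add_sum_erase _ (fun j => h (Function.update a i x j)) (Finset.mem_univ i)]
  rw [Function.update_self]
  congr 1
  refine Finset.sum_congr rfl fun j hj => ?_
  rw [Function.update_of_ne (Finset.ne_of_mem_erase hj)]

lemma boltz_update_eq {n : ℕ} (a : Fin n → ℝ) (i : Fin n) (x : ℝ) :
    boltz (Function.update a i x) =
      (x * Real.exp x + ∑ j ∈ Finset.univ.erase i, a j * Real.exp (a j)) /
        (Real.exp x + ∑ j ∈ Finset.univ.erase i, Real.exp (a j)) := by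
  unfold boltz softmax
  simp only [← mul_div_assoc]
  rw [← Finset.sum_div]
  congr 1
  · have := sum_update_aux a i x (fun y => y * Real.exp y)
    simpa using this
  · have := sum_update_aux a i x (fun y => Real.exp y)
    simpa using this

theorem statement9 (n : ℕ) (hn : 1 ≤ n) (i : Fin n) (a : Fin n → ℝ) :
    deriv (fun x => boltz (Function.update a i x)) (a i) =
      softmax a i * (1 + Real.log (softmax a i) + entS (softmax a)) := by
  set T : ℝ := ∑ j, Real.exp (a j) with hT
  have hTpos : 0 < T := Finset.sum_pos (fun j _ => Real.exp_pos _)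
    (Finset.univ_nonempty_iff.2 ⟨i⟩)
  have hTne : T ≠ 0 := ne_of_gt hTpos
  set C : ℝ := ∑ j ∈ Finset.univ.erase i, Real.exp (a j) with hC
  set D : ℝ := ∑ j ∈ Finset.univ.erase i, a j * Real.exp (a j) with hD
  have hTC : Real.exp (a i) + C = T :=
    Finset.add_sum_erase _ (fun j => Real.exp (a j)) (Finset.mem_univ i)
  set B : ℝ := ∑ j, a j * Real.exp (a j) with hB
  have hBD : a i * Real.exp (a i) + D = B :=
    Finset.add_sum_erase _ (fun j => a j * Real.exp (a j)) (Finset.mem_univ i)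
  -- rewrite the function
  have hfun : (fun x => boltz (Function.update a i x)) =
      fun x => (x * Real.exp x + D) / (Real.exp x + C) := by
    funext x; exact boltz_update_eq a i x
  have hden : Real.exp (a i) + C ≠ 0 := by rw [hTC]; exact hTne
  have h1 : HasDerivAt (fun x : ℝ => x * Real.exp x + D)
      (1 * Real.exp (a i) + a i * Real.exp (a i)) (a i) :=
    ((hasDerivAt_id (a i)).mul (Real.hasDerivAt_exp (a i))).add_const D
  have h2 : HasDerivAt (fun x : ℝ => Real.exp x + C) (Real.exp (a i)) (a i) :=
    (Real.hasDerivAt_exp (a i)).add_const C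
  have hder : deriv (fun x => (x * Real.exp x + D) / (Real.exp x + C)) (a i) =
      ((1 * Real.exp (a i) + a i * Real.exp (a i)) * (Real.exp (a i) + C) - (a i * Real.exp (a i) + D) * Real.exp (a i)) /
        (Real.exp (a i) + C) ^ 2 := (h1.div h2 hden).deriv
  rw [hfun, hder]
  -- compute the RHS pieces
  have hsm : softmax a i = Real.exp (a i) / T := rfl
  have hlog : Real.log (softmax a i) = a i - Real.log T := by
    rw [hsm, Real.log_div (Real.exp_ne_zero _) hTne, Real.log_exp]
  have hsum1 : ∑ j, softmax a j = 1 := by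
    unfold softmax
    rw [← Finset.sum_div, ← hT, div_self hTne]
  have hboltz : boltz a = B / T := by
    unfold boltz softmax
    simp only [← mul_div_assoc]
    rw [← Finset.sum_div, ← hT]
  have hent : entS (softmax a) = Real.log T - B / T := by
    unfold entS
    have : ∀ j : Fin n, softmax a j * Real.log (softmax a j) =
        softmax a j * a j - softmax a j * Real.log T := by
      intro j
      have : Real.log (softmax a j) = a j - Real.log T := by
        show Real.log (Real.exp (a j) / T) = _
        rw [Real.log_div (Real.exp_ne_zero _) hTne, Real.log_exp]
      rw [this]; ring
    rw [Finset.sum_congr rfl fun j _ => this j, Finset.sum_sub_distrib,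
      ← Finset.sum_mul, hsum1, one_mul]
    have : ∑ j, softmax a j * a j = B / T := by
      rw [← hboltz]
      unfold boltz
      exact Finset.sum_congr rfl fun j _ => by ring
    rw [this]; ring
  rw [hlog, hent, hsm]
  have hDB : D = B - a i * Real.exp (a i) := by linarith
  have hCT : C = T - Real.exp (a i) := by linarith
  rw [hDB, hCT]
  have he : (Real.exp (a i) + (T - Real.exp (a i))) = T := by ring
  rw [he]
  field_simp
  ring

end
end

section
/- For every n ≥ 1, every i ∈ [n], and every a ∈ ℝⁿ, the partial derivative ∂Boltz(a)/∂a_i is strictly negative if and only if a_i < ℒ(a) − 𝒮(σ_S[a]) − 1, where ℒ(a) = log(Σ_j e^{a_j}). -/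
open scoped BigOperators Classical
open Matrix

noncomputable section

theorem statement10 (n : ℕ) (hn : 1 ≤ n) (i : Fin n) (a : Fin n → ℝ) :
    deriv (fun x => boltz (Function.update a i x)) (a i) < 0 ↔
      a i < logSumExp a - entS (softmax a) - 1 := by
  classical
  set t := a i with ht
  set e : ℝ := ∑ j ∈ Finset.univ.erase i, Real.exp (a j) with he
  set c : ℝ := ∑ j ∈ Finset.univ.erase i, a j * Real.exp (a j) with hc
  have he0 : 0 ≤ e := Finset.sum_nonneg fun j _ => (Real.exp_pos _).le
  have hD : ∀ x : ℝ, 0 < Real.exp x + e := fun x =>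
    add_pos_of_pos_of_nonneg (Real.exp_pos x) he0
  have hsum : ∀ (g : ℝ → ℝ) (x : ℝ),
      (∑ j, g (Function.update a i x j)) = g x + ∑ j ∈ Finset.univ.erase i, g (a j) := by
    intro g x
    rw [← Finset.add_sum_erase _ _ (Finset.mem_univ i), Function.update_self]
    congr 1
    exact Finset.sum_congr rfl fun j hj => by
      rw [Function.update_of_ne (Finset.ne_of_mem_erase hj)]
  have hfun : ∀ x : ℝ,
      boltz (Function.update a i x) = (x * Real.exp x + c) / (Real.exp x + e) := by
    intro x
    simp only [boltz, softmax]
    have h1 : (∑ j, Function.update a i x j *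
        (Real.exp (Function.update a i x j) / ∑ k, Real.exp (Function.update a i x k)))
        = (∑ j, Function.update a i x j * Real.exp (Function.update a i x j)) /
          (∑ k, Real.exp (Function.update a i x k)) := by
      rw [Finset.sum_div]
      exact Finset.sum_congr rfl fun j _ => (mul_div_assoc _ _ _).symm
    rw [h1, hsum (fun y => y * Real.exp y) x, hsum Real.exp x]
  -- total sum positive
  have hZ : 0 < ∑ j, Real.exp (a j) :=
    Finset.sum_pos (fun j _ => Real.exp_pos _) ⟨i, Finset.mem_univ i⟩
  -- softmax sums to 1
  have hsum1 : ∑ j, softmax a j = 1 := by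
    simp only [softmax, ← Finset.sum_div]
    exact div_self hZ.ne'
  -- entropy identity
  have hent : entS (softmax a) = logSumExp a - boltz a := by
    have hlogp : ∀ j, Real.log (softmax a j) = a j - Real.log (∑ k, Real.exp (a k)) := by
      intro j
      simp only [softmax]
      rw [Real.log_div (Real.exp_ne_zero _) hZ.ne', Real.log_exp]
    simp only [entS, boltz, hlogp, mul_sub, Finset.sum_sub_distrib, ← Finset.sum_mul,
      hsum1, one_mul, logSumExp]
    have : ∑ j, softmax a j * a j = ∑ j, a j * softmax a j :=
      Finset.sum_congr rfl fun j _ => mul_comm _ _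
    rw [this]; ring
  -- derivative
  have hderiv : deriv (fun x => boltz (Function.update a i x)) t =
      ((1 * Real.exp t + t * Real.exp t) * (Real.exp t + e)
        - (t * Real.exp t + c) * Real.exp t) / (Real.exp t + e) ^ 2 := by
    have hF : (fun x => boltz (Function.update a i x))
        = fun x => (x * Real.exp x + c) / (Real.exp x + e) := funext hfun
    rw [hF]
    have hnum : HasDerivAt (fun x : ℝ => x * Real.exp x + c)
        (1 * Real.exp t + t * Real.exp t) t :=
      ((hasDerivAt_id t).mul (Real.hasDerivAt_exp t)).add_const c
    have hden : HasDerivAt (fun x : ℝ => Real.exp x + e) (Real.exp t) t :=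
      (Real.hasDerivAt_exp t).add_const e
    exact (hnum.div hden (hD t).ne').deriv
  have hBoltz : boltz a = (t * Real.exp t + c) / (Real.exp t + e) := by
    have := hfun t
    rwa [show Function.update a i t = a from Function.update_eq_self i a] at this
  rw [hderiv, hent]
  have hden2 : 0 < (Real.exp t + e) ^ 2 := pow_pos (hD t) 2
  rw [div_lt_iff₀ hden2, zero_mul]
  have hRHS : logSumExp a - (logSumExp a - boltz a) - 1 = boltz a - 1 := by ring
  rw [hRHS, hBoltz, lt_sub_iff_add_lt, lt_div_iff₀ (hD t)]
  constructor <;> intro h <;> nlinarith [Real.exp_pos t, hD t]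

end
end

section
/- Let n ≥ 1, i ∈ [n], and a ∈ ℝⁿ. If a_i < max_{j ∈ [n]} a_j − log n − 1, then ∂Boltz(a)/∂a_i < 0; that is, the Boltzmann operator is strictly decreasing in the coordinate a_i on the region where a_i lies more than log n + 1 below the maximum entry. -/
open scoped BigOperators Classical
open Matrix

noncomputable section

theorem statement11 (n : ℕ) (hn : 1 ≤ n) (i : Fin n) (a : Fin n → ℝ)
    (h : a i < Finset.univ.sup' ⟨i, Finset.mem_univ i⟩ a - Real.log n - 1) :
    deriv (fun x => boltz (Function.update a i x)) (a i) < 0 := by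
  classical
  set M := Finset.univ.sup' ⟨i, Finset.mem_univ i⟩ a with hM
  set C : ℝ := ∑ j ∈ Finset.univ.erase i, Real.exp (a j) with hC
  set D : ℝ := ∑ j ∈ Finset.univ.erase i, a j * Real.exp (a j) with hD
  have hCnn : 0 ≤ C := Finset.sum_nonneg fun j _ => (Real.exp_pos _).le
  set S : ℝ := ∑ j, Real.exp (a j) with hS
  set T : ℝ := ∑ j, a j * Real.exp (a j) with hT
  have hSpos : 0 < S := Finset.sum_pos (fun j _ => Real.exp_pos _) ⟨i, Finset.mem_univ i⟩
  have hSplit : S = Real.exp (a i) + C := by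
    rw [hS, ← Finset.add_sum_erase _ _ (Finset.mem_univ i)]
  have hTsplit : T = a i * Real.exp (a i) + D := by
    rw [hT, ← Finset.add_sum_erase _ _ (Finset.mem_univ i)]
  have hfun : (fun x => boltz (Function.update a i x))
      = fun x => (x * Real.exp x + D) / (Real.exp x + C) := by
    funext x
    have hnum : ∑ j, Function.update a i x j * Real.exp (Function.update a i x j)
        = x * Real.exp x + D := by
      rw [← Finset.add_sum_erase _ _ (Finset.mem_univ i), Function.update_self]
      congr 1
      refine Finset.sum_congr rfl fun j hj => ?_
      rw [Function.update_of_ne (Finset.ne_of_mem_erase hj)]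
    have hden : ∑ j, Real.exp (Function.update a i x j) = Real.exp x + C := by
      rw [← Finset.add_sum_erase _ _ (Finset.mem_univ i), Function.update_self]
      congr 1
      refine Finset.sum_congr rfl fun j hj => ?_
      rw [Function.update_of_ne (Finset.ne_of_mem_erase hj)]
    simp only [boltz, softmax, hden, ← mul_div_assoc]
    rw [← Finset.sum_div, hnum]
  have hpos : ∀ x : ℝ, 0 < Real.exp x + C := fun x => by positivity
  have h1 : HasDerivAt (fun x : ℝ => x * Real.exp x + D)
      (Real.exp (a i) + a i * Real.exp (a i)) (a i) := by
    have := ((hasDerivAt_id (a i)).mul (Real.hasDerivAt_exp (a i))).add_const D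
    refine HasDerivAt.congr_deriv this ?_
    simp only [id_eq]
    ring
  have h2 : HasDerivAt (fun x : ℝ => Real.exp x + C) (Real.exp (a i)) (a i) :=
    (Real.hasDerivAt_exp (a i)).add_const C
  have hder : HasDerivAt (fun x => (x * Real.exp x + D) / (Real.exp x + C))
      (((Real.exp (a i) + a i * Real.exp (a i)) * (Real.exp (a i) + C)
        - (a i * Real.exp (a i) + D) * Real.exp (a i)) / (Real.exp (a i) + C) ^ 2) (a i) :=
    h1.div h2 (hpos _).ne'
  rw [hfun, hder.deriv]
  have hMle : Real.exp M ≤ S := by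
    obtain ⟨j, _, hj⟩ := Finset.exists_mem_eq_sup' (⟨i, Finset.mem_univ i⟩ :
      Finset.univ.Nonempty) a
    calc Real.exp M = Real.exp (a j) := by rw [hM, hj]
    _ ≤ S := Finset.single_le_sum (fun k _ => (Real.exp_pos (a k)).le) (Finset.mem_univ j)
  have hlogS : M ≤ Real.log S := by
    have := Real.log_le_log (Real.exp_pos M) hMle
    rwa [Real.log_exp] at this
  have hnpos : (0:ℝ) < n := by exact_mod_cast hn
  have hkey : S * Real.log S - T ≤ S * Real.log n := by
    have hterm : ∀ j : Fin n, Real.exp (a j) * (Real.log S - a j)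
        ≤ S / n + Real.exp (a j) * (Real.log n - 1) := by
      intro j
      have hy : 0 < S * Real.exp (-a j) := by positivity
      have hl : Real.log (S * Real.exp (-a j) / n) ≤ S * Real.exp (-a j) / n - 1 :=
        Real.log_le_sub_one_of_pos (by positivity)
      rw [Real.log_div hy.ne' hnpos.ne', Real.log_mul hSpos.ne' (Real.exp_ne_zero _),
        Real.log_exp] at hl
      have hle : Real.log S - a j ≤ S * Real.exp (-a j) / n + Real.log n - 1 := by linarith
      calc Real.exp (a j) * (Real.log S - a j)
          ≤ Real.exp (a j) * (S * Real.exp (-a j) / n + Real.log n - 1) :=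
            mul_le_mul_of_nonneg_left hle (Real.exp_pos _).le
        _ = S / n * (Real.exp (a j) * Real.exp (-a j)) + Real.exp (a j) * (Real.log n - 1) := by
            ring
        _ = S / n + Real.exp (a j) * (Real.log n - 1) := by
            rw [← Real.exp_add, add_neg_cancel, Real.exp_zero, mul_one]
    have hsum := Finset.sum_le_sum (fun j (_ : j ∈ (Finset.univ : Finset (Fin n))) => hterm j)
    have hL : ∑ j : Fin n, Real.exp (a j) * (Real.log S - a j) = S * Real.log S - T := by
      simp only [mul_sub]
      rw [Finset.sum_sub_distrib, ← Finset.sum_mul]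
      have h2' : ∑ j : Fin n, Real.exp (a j) * a j = T := by
        rw [hT]; exact Finset.sum_congr rfl fun j _ => mul_comm _ _
      rw [h2', hS]
    have hR : ∑ j : Fin n, (S / n + Real.exp (a j) * (Real.log n - 1)) = S * Real.log n := by
      rw [Finset.sum_add_distrib, Finset.sum_const, Finset.card_univ, Fintype.card_fin,
        nsmul_eq_mul, ← Finset.sum_mul, ← hS]
      field_simp
      ring
    rw [hL, hR] at hsum
    exact hsum
  have hMS : S * M ≤ S * Real.log S := mul_le_mul_of_nonneg_left hlogS hSpos.le
  have hT' : (1 + a i) * S < T := by nlinarith [hSpos, h]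
  apply div_neg_of_neg_of_pos
  · rw [← hSplit, ← hTsplit]
    nlinarith [mul_pos (Real.exp_pos (a i)) (sub_pos.mpr hT')]
  · positivity


end
end

section
/- Let n ≥ 1, i ∈ [n], and a ∈ ℝⁿ. If a_i < max_{j ∈ [n]} a_j − log n − 3, then ∂²Boltz(a)/∂a_i² < 0; that is, the Boltzmann operator is strictly concave in the coordinate a_i on the region where a_i lies more than log n + 3 below the maximum entry. Moreover, on this region the second derivative equals p_i · [(1 − 2p_i)(log p_i + 𝒮(p) + 1) + 1] with p = σ_S[a], and this quantity is negative. -/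
open scoped BigOperators Classical
open Matrix

noncomputable section

lemma sum_exp_pos_s12 {n : ℕ} (i : Fin n) (a : Fin n → ℝ) : 0 < ∑ j, Real.exp (a j) :=
  Finset.sum_pos (fun j _ => Real.exp_pos _) ⟨i, Finset.mem_univ i⟩

lemma softmax_pos {n : ℕ} (a : Fin n → ℝ) (i : Fin n) : 0 < softmax a i :=
  div_pos (Real.exp_pos _) (sum_exp_pos_s12 i a)

lemma softmax_sum_one {n : ℕ} (i : Fin n) (a : Fin n → ℝ) : ∑ j, softmax a j = 1 := by
  simp only [softmax, ← Finset.sum_div]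
  rw [div_self (sum_exp_pos_s12 i a).ne']

lemma log_softmax {n : ℕ} (a : Fin n → ℝ) (j : Fin n) :
    Real.log (softmax a j) = a j - Real.log (∑ k, Real.exp (a k)) := by
  haveI : 0 < ∑ k, Real.exp (a k) := sum_exp_pos_s12 j a
  rw [softmax, Real.log_div (Real.exp_ne_zero _) this.ne', Real.log_exp]

lemma log_softmax_add_entS {n : ℕ} (a : Fin n → ℝ) (i : Fin n) :
    Real.log (softmax a i) + entS (softmax a) = a i - boltz a := by
  have hsum := softmax_sum_one i a
  have : entS (softmax a) = Real.log (∑ k, Real.exp (a k)) - boltz a := by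
    rw [entS, boltz]
    have : ∀ j ∈ Finset.univ, softmax a j * Real.log (softmax a j)
        = softmax a j * a j - softmax a j * Real.log (∑ k, Real.exp (a k)) := by
      intro j _; rw [log_softmax]; ring
    rw [Finset.sum_congr rfl this, Finset.sum_sub_distrib, ← Finset.sum_mul, hsum]
    simp [mul_comm]
  rw [log_softmax, this]; ring

lemma entS_softmax_le {n : ℕ} (hn : 1 ≤ n) (i : Fin n) (a : Fin n → ℝ) :
    entS (softmax a) ≤ Real.log n := by
  have hn0 : (0:ℝ) < n := by exact_mod_cast hn
  have key : ∀ j : Fin n, softmax a j - 1 / n - softmax a j * Real.log n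
      ≤ softmax a j * Real.log (softmax a j) := by
    intro j
    have hp := softmax_pos a j
    have h1 : (0:ℝ) < 1 / (n * softmax a j) := by positivity
    have h2 := Real.log_le_sub_one_of_pos h1
    rw [Real.log_div one_ne_zero (by positivity)] at h2
    rw [Real.log_one, Real.log_mul hn0.ne' hp.ne'] at h2
    -- h2 : 0 - (log n + log p) ≤ 1/(n p) - 1
    have h3 : 1 - 1 / (n * softmax a j) ≤ Real.log n + Real.log (softmax a j) := by linarith
    have h4 := mul_le_mul_of_nonneg_left h3 hp.le
    have h5 : softmax a j * (1 - 1 / (n * softmax a j)) = softmax a j - 1 / n := by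
      field_simp
    rw [h5, mul_add] at h4
    linarith
  have hsum := Finset.sum_le_sum (s := (Finset.univ : Finset (Fin n))) (fun j _ => key j)
  rw [Finset.sum_sub_distrib, Finset.sum_sub_distrib, softmax_sum_one i a,
    ← Finset.sum_mul, softmax_sum_one i a] at hsum
  simp only [Finset.sum_const, Finset.card_univ, Fintype.card_fin, nsmul_eq_mul] at hsum
  rw [entS]
  have : (n : ℝ) * (1 / n) = 1 := by field_simp
  rw [this] at hsum
  linarith


theorem statement12 (n : ℕ) (hn : 1 ≤ n) (i : Fin n) (a : Fin n → ℝ)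
    (h : a i < Finset.univ.sup' ⟨i, Finset.mem_univ i⟩ a - Real.log n - 3) :
    deriv (deriv (fun x => boltz (Function.update a i x))) (a i) =
        softmax a i *
          ((1 - 2 * softmax a i) * (Real.log (softmax a i) + entS (softmax a) + 1) + 1) ∧
      deriv (deriv (fun x => boltz (Function.update a i x))) (a i) < 0 := by
  have hi : i ∈ (Finset.univ : Finset (Fin n)) := Finset.mem_univ i
  set C := ∑ j ∈ Finset.univ.erase i, Real.exp (a j) with hCdef
  set D := ∑ j ∈ Finset.univ.erase i, a j * Real.exp (a j) with hDdef
  have hC0 : 0 ≤ C := Finset.sum_nonneg fun _ _ => (Real.exp_pos _).le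
  have hSx : ∀ x : ℝ, 0 < Real.exp x + C := fun x => by positivity
  have hsum_exp : ∀ x : ℝ, ∑ j, Real.exp (Function.update a i x j) = Real.exp x + C := by
    intro x
    rw [← Finset.add_sum_erase _ _ hi]
    congr 1
    · rw [Function.update_self]
    · exact Finset.sum_congr rfl fun j hj => by
        rw [Function.update_of_ne (Finset.ne_of_mem_erase hj)]
  have hsum_num : ∀ x : ℝ,
      ∑ j, Function.update a i x j * Real.exp (Function.update a i x j)
        = x * Real.exp x + D := by
    intro x
    rw [← Finset.add_sum_erase _ _ hi]
    congr 1
    · rw [Function.update_self]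
    · exact Finset.sum_congr rfl fun j hj => by
        rw [Function.update_of_ne (Finset.ne_of_mem_erase hj)]
  have hb : ∀ x : ℝ, boltz (Function.update a i x)
      = (x * Real.exp x + D) / (Real.exp x + C) := by
    intro x
    rw [boltz]
    simp only [softmax, hsum_exp]
    simp_rw [← mul_div_assoc]
    rw [← Finset.sum_div, hsum_num x]
  have hfun : (fun x => boltz (Function.update a i x))
      = fun x => (x * Real.exp x + D) / (Real.exp x + C) := funext hb
  have hderiv1 : deriv (fun x => (x * Real.exp x + D) / (Real.exp x + C))
      = fun x => Real.exp x * (Real.exp x + C * (1 + x) - D) / (Real.exp x + C) ^ 2 := by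
    funext x
    have h1 : HasDerivAt (fun x : ℝ => x * Real.exp x + D)
        (Real.exp x + x * Real.exp x) x := by
      have := ((hasDerivAt_id x).mul (Real.hasDerivAt_exp x)).add_const D
      simpa [add_comm] using this
    have h2 : HasDerivAt (fun x : ℝ => Real.exp x + C) (Real.exp x) x :=
      (Real.hasDerivAt_exp x).add_const C
    have h3 := h1.div h2 (hSx x).ne'
    have h4 : HasDerivAt (fun x : ℝ => (x * Real.exp x + D) / (Real.exp x + C))
        (Real.exp x * (Real.exp x + C * (1 + x) - D) / (Real.exp x + C) ^ 2) x := by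
      exact h3.congr_deriv (by ring)
    exact h4.deriv
  set y := a i with hy
  have hnum' : HasDerivAt (fun x => Real.exp x * (Real.exp x + C * (1 + x) - D))
      (Real.exp y * (Real.exp y + C) + Real.exp y * (Real.exp y + C * (1 + y) - D)) y := by
    have hinner : HasDerivAt (fun x : ℝ => Real.exp x + C * (1 + x) - D)
        (Real.exp y + C) y := by
      have h4 : HasDerivAt (fun x : ℝ => C * (1 + x)) C y := by
        simpa using ((hasDerivAt_id y).const_add (1:ℝ)).const_mul C
      simpa using ((Real.hasDerivAt_exp y).add h4).sub_const D
    have := (Real.hasDerivAt_exp y).mul hinner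
    exact this.congr_deriv (by ring)
  have hden' : HasDerivAt (fun x => (Real.exp x + C) ^ 2)
      (2 * (Real.exp y + C) * Real.exp y) y := by
    have := ((Real.hasDerivAt_exp y).add_const C).pow 2
    exact this.congr_deriv (by ring)
  have h2nd := hnum'.div hden' (pow_ne_zero 2 (hSx y).ne')
  have h2nd' : HasDerivAt
      (fun x => Real.exp x * (Real.exp x + C * (1 + x) - D) / (Real.exp x + C) ^ 2)
      (((Real.exp y * (Real.exp y + C) + Real.exp y * (Real.exp y + C * (1 + y) - D))
          * (Real.exp y + C) ^ 2
        - Real.exp y * (Real.exp y + C * (1 + y) - D)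
          * (2 * (Real.exp y + C) * Real.exp y)) / ((Real.exp y + C) ^ 2) ^ 2) y := h2nd
  -- facts about softmax / boltz at a
  have hS0 : ∑ j, Real.exp (a j) = Real.exp y + C := by
    have := hsum_exp y
    rwa [Function.update_eq_self] at this
  have hsoft : softmax a i = Real.exp y / (Real.exp y + C) := by
    rw [softmax, hS0, hy]
  have hBa : boltz a = (y * Real.exp y + D) / (Real.exp y + C) := by
    have := hb y
    rwa [Function.update_eq_self] at this
  have hlogent : Real.log (softmax a i) + entS (softmax a) = a i - boltz a :=
    log_softmax_add_entS a i
  have key : deriv (deriv (fun x => boltz (Function.update a i x))) (a i) =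
      softmax a i * ((1 - 2 * softmax a i)
        * (Real.log (softmax a i) + entS (softmax a) + 1) + 1) := by
    rw [hfun, hderiv1, ← hy, h2nd'.deriv, hlogent, hsoft, hBa]
    field_simp
    ring
  refine ⟨key, ?_⟩
  rw [key, hlogent]
  -- bounds
  set M := Finset.univ.sup' ⟨i, Finset.mem_univ i⟩ a with hMdef
  have hSpos : 0 < ∑ j, Real.exp (a j) := sum_exp_pos_s12 i a
  obtain ⟨k, -, hk⟩ := Finset.exists_mem_eq_sup' (⟨i, Finset.mem_univ i⟩ :
    (Finset.univ : Finset (Fin n)).Nonempty) a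
  have hexpM : Real.exp M ≤ ∑ j, Real.exp (a j) := by
    rw [hMdef, hk]
    exact Finset.single_le_sum (fun j _ => (Real.exp_pos (a j)).le) (Finset.mem_univ k)
  have hMlogS : M ≤ Real.log (∑ j, Real.exp (a j)) :=
    (Real.le_log_iff_exp_le hSpos).mpr hexpM
  have hlogn0 : (0:ℝ) ≤ Real.log n := Real.log_nonneg (by exact_mod_cast hn)
  -- boltz a = log S - entS (softmax a)
  have hentB : entS (softmax a) = Real.log (∑ j, Real.exp (a j)) - boltz a := by
    have h1 := log_softmax a i
    linarith [hlogent, h1]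
  have hent_le : entS (softmax a) ≤ Real.log n := entS_softmax_le hn i a
  have hB_ge : M - Real.log n ≤ boltz a := by linarith
  have h' : a i < M - Real.log n - 3 := by rw [← hy]; exact h
  have hq : a i - boltz a + 1 < -2 := by linarith
  have hp0 : 0 < softmax a i := softmax_pos a i
  have hpM : softmax a i < 1/4 := by
    have h1 : softmax a i ≤ Real.exp (a i) / Real.exp M := by
      rw [softmax]
      exact div_le_div_of_nonneg_left (Real.exp_pos _).le (Real.exp_pos M) hexpM
    have h2 : Real.exp (a i) / Real.exp M = Real.exp (a i - M) := (Real.exp_sub _ _).symm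
    have h3 : a i - M < -3 := by linarith
    have h4 : Real.exp (a i - M) < Real.exp (-3) := Real.exp_lt_exp.mpr h3
    have h5 : Real.exp (-3 : ℝ) ≤ 1/4 := by
      rw [Real.exp_neg]
      have h6 : (4:ℝ) ≤ Real.exp 3 := by
        have := Real.add_one_le_exp (3:ℝ)
        linarith
      rw [show (1:ℝ)/4 = (4:ℝ)⁻¹ by norm_num]
      exact inv_anti₀ (by norm_num) h6
    linarith [h1, h2 ▸ h1]
  have hinner : (1 - 2 * softmax a i) * (a i - boltz a + 1) + 1 < 0 := by
    have h12 : (1:ℝ)/2 ≤ 1 - 2 * softmax a i := by linarith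
    have hA : (1 - 2 * softmax a i) * (a i - boltz a + 1)
        ≤ (1 - 2 * softmax a i) * (-2) := by
      apply mul_le_mul_of_nonneg_left hq.le (by linarith)
    nlinarith
  exact mul_neg_of_pos_of_neg hp0 hinner

end
end

section
/- Let n ≥ 2 and let a = (a_1,…,a_{n−1}, a_n), b = (b_1,…,b_{n−1}, b_n) ∈ ℝⁿ be such that a_i = b_i for all i ∈ [n−1]. If max_{i ∈ [n−1]} a_i − δ > a_n > b_n for some δ > log n + 3, then Boltz(b) − Boltz(a) > (a_n − b_n) · (δ + a_n − b_n − log n − 1) · e^{b_n} / Σ_{i=1}^n e^{b_i}. -/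
open scoped BigOperators Classical
open Matrix

noncomputable section

lemma exp_cubic_le (u : ℝ) (hu : 0 ≤ u) : 1 + u + u^2/2 + u^3/6 ≤ Real.exp u := by
  have h := Real.sum_le_exp_of_nonneg hu 4
  rw [Finset.sum_range_succ, Finset.sum_range_succ, Finset.sum_range_succ,
    Finset.sum_range_one] at h
  norm_num [Nat.factorial] at h
  linarith

lemma gibbs {α : Type*} (S : Finset α) (hS : S.Nonempty) (c : α → ℝ) :
    (∑ i ∈ S, Real.exp (c i)) * (S.sup' hS c - Real.log S.card) ≤
      ∑ i ∈ S, c i * Real.exp (c i) := by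
  set M := S.sup' hS c with hM
  have hcard0 : 0 < (S.card : ℝ) := by exact_mod_cast Finset.card_pos.mpr hS
  have key : ∀ i ∈ S, Real.exp (c i) * (M - Real.log S.card) - c i * Real.exp (c i)
      ≤ Real.exp M / S.card - Real.exp (c i) := by
    intro i hi
    have ht : (0:ℝ) < Real.exp (M - c i) / S.card := by positivity
    have hlog := Real.log_le_sub_one_of_pos ht
    rw [Real.log_div (Real.exp_pos _).ne' hcard0.ne', Real.log_exp] at hlog
    have hmul := mul_le_mul_of_nonneg_left hlog (Real.exp_pos (c i)).le
    have hprod : Real.exp (c i) * Real.exp (M - c i) = Real.exp M := by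
      rw [← Real.exp_add]; ring_nf
    calc Real.exp (c i) * (M - Real.log S.card) - c i * Real.exp (c i)
        = Real.exp (c i) * (M - c i - Real.log S.card) := by ring
      _ ≤ Real.exp (c i) * (Real.exp (M - c i) / S.card - 1) := hmul
      _ = Real.exp M / S.card - Real.exp (c i) := by
          rw [mul_sub, mul_one, ← mul_div_assoc, hprod]
  have hsum := Finset.sum_le_sum key
  rw [Finset.sum_sub_distrib, Finset.sum_sub_distrib, ← Finset.sum_mul,
    Finset.sum_const, nsmul_eq_mul] at hsum
  have hMle : Real.exp M ≤ ∑ i ∈ S, Real.exp (c i) := by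
    obtain ⟨i0, hi0, h0⟩ := Finset.exists_mem_eq_sup' hS c
    rw [hM, h0]
    exact Finset.single_le_sum (fun i _ => (Real.exp_pos (c i)).le) hi0
  have hcc : (S.card : ℝ) * (Real.exp M / S.card) = Real.exp M := by field_simp
  linarith

lemma final_ineq (K lam eta u : ℝ) (hK : 2 < K) (hu : 0 < u) (heta0 : 0 < eta)
    (heta : eta ≤ 1/4) (hlam : eta * (K + 1) < lam) :
    (1 + eta) * u * (K + 1 + u) < (K + 1 + lam) * (Real.exp u - 1) := by
  have hc := exp_cubic_le u hu.le
  have hlam0 : 0 < lam := lt_of_lt_of_le (mul_pos heta0 (by linarith)) hlam.le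
  nlinarith [mul_nonneg (show (0:ℝ) ≤ K + 1 + lam by linarith)
      (show (0:ℝ) ≤ Real.exp u - (1 + u + u^2/2 + u^3/6) by linarith),
    mul_lt_mul_of_pos_right hlam hu,
    mul_nonneg (mul_nonneg (show (0:ℝ) ≤ K - 2 by linarith) hu.le) hu.le,
    mul_nonneg (mul_nonneg (show (0:ℝ) ≤ 1/4 - eta by linarith) hu.le) hu.le,
    mul_nonneg (mul_nonneg hlam0.le hu.le) hu.le,
    mul_nonneg (mul_nonneg (mul_nonneg hlam0.le hu.le) hu.le) hu.le,
    mul_nonneg (mul_nonneg (mul_nonneg (show (0:ℝ) ≤ K + 1 by linarith) hu.le) hu.le) hu.le]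

set_option maxHeartbeats 1000000 in
lemma helper13 (n : ℕ) (hn : 2 ≤ n) (S : Finset (Fin n)) (hS : S.Nonempty) (L : Fin n)
    (hLS : L ∉ S) (hcard : S.card = n - 1) (a b : Fin n → ℝ)
    (heq : ∀ i ∈ S, a i = b i) (δ : ℝ) (hδ : Real.log n + 3 < δ)
    (hmax : a L < S.sup' hS a - δ) (hab : b L < a L) :
    (a L - b L) * (δ + a L - b L - Real.log n - 1) *
      (Real.exp (b L) / ∑ i, Real.exp (b i)) < boltz b - boltz a := by
  have hn1R : (2:ℝ) ≤ (n:ℝ) := by exact_mod_cast hn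
  have hnpos : (0:ℝ) < (n:ℝ) := by linarith
  set M := S.sup' hS a with hMdef
  set A := ∑ i ∈ S, Real.exp (a i) with hAdef
  set T := ∑ i ∈ S, a i * Real.exp (a i) with hTdef
  have hA : 0 < A := Finset.sum_pos (fun i _ => Real.exp_pos _) hS
  have huniv : insert L S = (Finset.univ : Finset (Fin n)) := by
    apply Finset.eq_univ_of_card
    rw [Finset.card_insert_of_notMem hLS, hcard, Fintype.card_fin]
    omega
  have hsum : ∀ f : Fin n → ℝ, ∑ i, f i = f L + ∑ i ∈ S, f i := by
    intro f
    rw [← huniv, Finset.sum_insert hLS]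
  have hAb : ∑ i ∈ S, Real.exp (b i) = A :=
    Finset.sum_congr rfl fun i hi => by rw [← heq i hi]
  have hTb : ∑ i ∈ S, b i * Real.exp (b i) = T :=
    Finset.sum_congr rfl fun i hi => by rw [← heq i hi]
  have hDa : (∑ j, Real.exp (a j)) = Real.exp (a L) + A := hsum _
  have hDb : (∑ j, Real.exp (b j)) = Real.exp (b L) + A := by
    rw [hsum (fun j => Real.exp (b j)), hAb]
  have hboltza : boltz a = (a L * Real.exp (a L) + T) / (Real.exp (a L) + A) := by
    simp only [boltz, softmax]
    simp only [hDa]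
    simp only [← mul_div_assoc]
    rw [← Finset.sum_div, hsum (fun i => a i * Real.exp (a i))]
  have hboltzb : boltz b = (b L * Real.exp (b L) + T) / (Real.exp (b L) + A) := by
    simp only [boltz, softmax]
    simp only [hDb]
    simp only [← mul_div_assoc]
    rw [← Finset.sum_div, hsum (fun i => b i * Real.exp (b i)), hTb]
  rw [hboltza, hboltzb, hDb]
  set x := a L with hxdef
  set y := b L with hydef
  have hu : 0 < x - y := by linarith
  have hv : 0 < Real.exp y := Real.exp_pos _
  have hw : Real.exp y < Real.exp x := Real.exp_lt_exp.mpr hab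
  have hwv : 0 < Real.exp x - Real.exp y := by linarith
  have F2 : x + δ < M := by linarith [hmax]
  have hMA : Real.exp M ≤ A := by
    obtain ⟨i0, hi0, h0⟩ := Finset.exists_mem_eq_sup' hS a
    rw [hMdef, h0]
    exact Finset.single_le_sum (fun i _ => (Real.exp_pos (a i)).le) hi0
  have F3 : Real.exp x < A * Real.exp (-δ) := by
    have h1 : Real.exp x < Real.exp (M - δ) := Real.exp_lt_exp.mpr (by linarith)
    have h2 : Real.exp (M - δ) = Real.exp M * Real.exp (-δ) := by
      rw [← Real.exp_add]; ring_nf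
    rw [h2] at h1
    exact lt_of_lt_of_le h1 (mul_le_mul_of_nonneg_right hMA (Real.exp_pos _).le)
  have hcardR : (S.card : ℝ) = (n:ℝ) - 1 := by
    rw [hcard, Nat.cast_sub (by omega : 1 ≤ n), Nat.cast_one]
  have F1 : A * (M - Real.log ((n:ℝ) - 1)) ≤ T := by
    have h := gibbs S hS a
    rw [hcardR] at h
    exact h
  have hlogn : 0 < Real.log n := Real.log_pos (by linarith)
  have hK : 2 < δ - Real.log n - 1 := by linarith
  have heta0 : 0 < Real.exp (-δ) := Real.exp_pos _
  have heta4 : Real.exp (-δ) ≤ 1/4 := by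
    have h3 : (3:ℝ) < δ := by linarith
    have h5 : Real.exp (-δ) ≤ Real.exp (-3) := Real.exp_le_exp.mpr (by linarith)
    have h6 : (4:ℝ) ≤ Real.exp 3 := by linarith [Real.add_one_le_exp (3:ℝ)]
    have h7 : Real.exp (-3) ≤ 1/4 := by
      rw [Real.exp_neg]
      rw [inv_le_comm₀ (Real.exp_pos 3) (by norm_num)]
      norm_num
      linarith
    linarith
  have hn1R' : (1:ℝ) ≤ (n:ℝ) - 1 := by linarith
  have hlam : Real.exp (-δ) * ((δ - Real.log n - 1) + 1) <
      Real.log n - Real.log ((n:ℝ) - 1) := by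
    have e : δ - Real.log (n:ℝ) - 1 + 1 = δ - Real.log n := by ring
    rw [e]
    have hs3 : (3:ℝ) < δ - Real.log n := by linarith
    have hexps : δ - Real.log n < Real.exp (δ - Real.log n) := by
      linarith [Real.add_one_le_exp (δ - Real.log (n:ℝ))]
    have hetaval : Real.exp (-δ) = Real.exp (-(δ - Real.log n)) / n := by
      rw [show -δ = -(δ - Real.log (n:ℝ)) + -Real.log (n:ℝ) by ring, Real.exp_add,
        Real.exp_neg (Real.log (n:ℝ)), Real.exp_log hnpos]
      ring
    have h1 : Real.exp (-(δ - Real.log n)) * (δ - Real.log n) < 1 := by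
      have hp := Real.exp_pos (-(δ - Real.log (n:ℝ)))
      have hq : Real.exp (-(δ - Real.log (n:ℝ))) * Real.exp (δ - Real.log n) = 1 := by
        rw [← Real.exp_add]; simp
      nlinarith [hexps, hp]
    have h2 : Real.log ((n:ℝ) - 1) - Real.log n ≤ -(1/n) := by
      have hq : (0:ℝ) < ((n:ℝ) - 1) / n := by positivity
      have h := Real.log_le_sub_one_of_pos hq
      rw [Real.log_div (by linarith : ((n:ℝ) - 1) ≠ 0) (ne_of_gt hnpos)] at h
      have he : ((n:ℝ) - 1) / n - 1 = -(1/n) := by field_simp; ring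
      linarith [he ▸ h]
    have h3 : Real.exp (-δ) * (δ - Real.log n) < 1/n := by
      rw [hetaval, div_mul_eq_mul_div]
      exact (div_lt_div_iff_of_pos_right hnpos).mpr h1
    linarith
  have F5 := final_ineq (δ - Real.log n - 1) (Real.log n - Real.log ((n:ℝ) - 1))
    (Real.exp (-δ)) (x - y) hK hu heta0 heta4 hlam
  have e1 : A * ((x + δ) - Real.log ((n:ℝ) - 1)) * (Real.exp x - Real.exp y)
      < T * (Real.exp x - Real.exp y) := by
    have s1 : A * ((x + δ) - Real.log ((n:ℝ) - 1)) < A * (M - Real.log ((n:ℝ) - 1)) :=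
      mul_lt_mul_of_pos_left (by linarith) hA
    calc A * ((x + δ) - Real.log ((n:ℝ) - 1)) * (Real.exp x - Real.exp y)
        < A * (M - Real.log ((n:ℝ) - 1)) * (Real.exp x - Real.exp y) :=
          mul_lt_mul_of_pos_right s1 hwv
      _ ≤ T * (Real.exp x - Real.exp y) := mul_le_mul_of_nonneg_right F1 hwv.le
  have e2 : (x - y) * Real.exp y * Real.exp x
      < (x - y) * Real.exp y * (A * Real.exp (-δ)) :=
    mul_lt_mul_of_pos_left F3 (mul_pos hu hv)
  have e4 : A * ((x + δ) - Real.log ((n:ℝ) - 1)) * (Real.exp x - Real.exp y)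
      + A * (y * Real.exp y - x * Real.exp x)
      = A * Real.exp y * ((δ - Real.log n + (Real.log n - Real.log ((n:ℝ) - 1))) *
        (Real.exp (x - y) - 1) - (x - y)) := by
    have hxy : Real.exp x = Real.exp y * Real.exp (x - y) := by
      rw [← Real.exp_add]; ring_nf
    rw [hxy]; ring
  have e5 : (x - y) * (δ + x - y - Real.log n - 1) * Real.exp y * (Real.exp x + A)
      < (x - y) * (δ + x - y - Real.log n - 1) * Real.exp y *
        (A * Real.exp (-δ) + A) := by
    have hC : 0 < (x - y) * (δ + x - y - Real.log n - 1) * Real.exp y :=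
      mul_pos (mul_pos hu (by linarith)) hv
    exact mul_lt_mul_of_pos_left (by linarith) hC
  have e6 : A * Real.exp y * ((1 + Real.exp (-δ)) * (x - y) *
        ((δ - Real.log n - 1) + 1 + (x - y)))
      < A * Real.exp y * (((δ - Real.log n - 1) + 1 +
        (Real.log n - Real.log ((n:ℝ) - 1))) * (Real.exp (x - y) - 1)) :=
    mul_lt_mul_of_pos_left F5 (mul_pos hA hv)
  have key : (x - y) * (δ + x - y - Real.log n - 1) * Real.exp y * (Real.exp x + A)
      < (y * Real.exp y + T) * (Real.exp x + A)
        - (Real.exp y + A) * (x * Real.exp x + T) := by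
    linarith [e1, e2, e4, e5, e6]
  have hDy : (0:ℝ) < Real.exp y + A := by positivity
  have hDx : (0:ℝ) < Real.exp x + A := by positivity
  rw [div_sub_div _ _ hDy.ne' hDx.ne']
  have hL : (x - y) * (δ + x - y - Real.log n - 1) * (Real.exp y / (Real.exp y + A))
      = ((x - y) * (δ + x - y - Real.log n - 1) * Real.exp y * (Real.exp x + A)) /
        ((Real.exp y + A) * (Real.exp x + A)) := by
    field_simp
  rw [hL, div_lt_div_iff₀ (mul_pos hDy hDx) (mul_pos hDy hDx)]
  exact mul_lt_mul_of_pos_right key (mul_pos hDy hDx)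

theorem statement13 (n : ℕ) (hn : 2 ≤ n) (a b : Fin n → ℝ) (δ : ℝ)
    (hδ : Real.log n + 3 < δ)
    (heq : ∀ i : Fin n, (i : ℕ) < n - 1 → a i = b i)
    (hmax : a ⟨n - 1, by omega⟩ <
      (Finset.univ.filter (fun i : Fin n => (i : ℕ) < n - 1)).sup'
        (⟨⟨0, by omega⟩, by simp; omega⟩) a - δ)
    (hab : b ⟨n - 1, by omega⟩ < a ⟨n - 1, by omega⟩) :
    (a ⟨n - 1, by omega⟩ - b ⟨n - 1, by omega⟩) *
        (δ + a ⟨n - 1, by omega⟩ - b ⟨n - 1, by omega⟩ - Real.log n - 1) *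
        (Real.exp (b ⟨n - 1, by omega⟩) / ∑ i, Real.exp (b i))
      < boltz b - boltz a := by
  have hScard : (Finset.univ.filter (fun i : Fin n => (i : ℕ) < n - 1)).card = n - 1 := by
    have hEq : (Finset.univ.filter (fun i : Fin n => (i : ℕ) < n - 1))
        = Finset.univ.erase ⟨n - 1, by omega⟩ := by
      ext i
      simp [Finset.mem_erase, Fin.ext_iff]
      omega
    rw [hEq, Finset.card_erase_of_mem (Finset.mem_univ _), Finset.card_univ,
      Fintype.card_fin]
  have hLS : (⟨n - 1, by omega⟩ : Fin n) ∉
      Finset.univ.filter (fun i : Fin n => (i : ℕ) < n - 1) := by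
    simp
  exact helper13 n hn _ _ ⟨n - 1, by omega⟩ hLS hScard a b
    (fun i hi => heq i (by simpa using hi)) δ hδ hmax hab

end
end
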